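/- arXiv:2006.15546 — 3 statements merged into one kernel-verified Lean document; each statement's English description precedes it below -/
import Mathlib

section
/- Let (f,a) and (g,b) be elements of the partial wreath product IS_m ≀_p IS_n. Then (f,a) R (g,b) (Green's R-relation) if and only if dom(a) = dom(b) and for every z ∈ dom(a) one has f(z) R g(z) in IS_m, i.e. dom(f(z)) = dom(g(z)). -/
open scoped Classical

/-- `IS n` is the full inverse symmetric semigroup: all partial bijections of `Fin n`;
multiplication is composition of partial maps (maps acting on the right). -/
abbrev IS (n : ℕ) : Type := PEquiv (Fin n) (Fin n)

noncomputable section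
namespace ISW

instance {n : ℕ} : Mul (IS n) := ⟨PEquiv.trans⟩
instance {n : ℕ} : One (IS n) := ⟨PEquiv.refl _⟩

/-- The domain of a partial bijection. -/
def pdom {n : ℕ} (f : IS n) : Set (Fin n) := {x | (f x).isSome}

/-- The range of a partial bijection. -/
def pran {n : ℕ} (f : IS n) : Set (Fin n) := {y | (f.symm y).isSome}

/-- Green's R-relation on a semigroup (with identity): `u R v` iff `uS = vS`. -/
def GreenR {S : Type*} [Mul S] (u v : S) : Prop :=
  {w | ∃ s, w = u * s} = {w | ∃ s, w = v * s}

/-- Green's L-relation on a semigroup (with identity): `u L v` iff `Su = Sv`. -/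
def GreenL {S : Type*} [Mul S] (u v : S) : Prop :=
  {w | ∃ s, w = s * u} = {w | ∃ s, w = s * v}

/-- An R-cross-section: a subsemigroup containing exactly one element of every
Green R-class. -/
def IsRCrossSection {S : Type*} [Mul S] (T : Set S) : Prop :=
  (∀ a ∈ T, ∀ b ∈ T, a * b ∈ T) ∧ ∀ x : S, ∃! t, t ∈ T ∧ GreenR x t

/-- An L-cross-section: a subsemigroup containing exactly one element of every
Green L-class. -/
def IsLCrossSection {S : Type*} [Mul S] (T : Set S) : Prop :=
  (∀ a ∈ T, ∀ b ∈ T, a * b ∈ T) ∧ ∀ x : S, ∃! t, t ∈ T ∧ GreenL x t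

/-- `φ` realizes a semigroup isomorphism from `T₁` onto `T₂`. -/
def IsSemiIso {S₁ S₂ : Type*} [Mul S₁] [Mul S₂] (T₁ : Set S₁) (T₂ : Set S₂)
    (φ : S₁ → S₂) : Prop :=
  Set.BijOn φ T₁ T₂ ∧ ∀ a ∈ T₁, ∀ b ∈ T₁, φ (a * b) = φ a * φ b

/-- The partial wreath product `IS m ≀_p IS n`: pairs `(f, a)` with `a ∈ IS n` and
`f` a partial map from `Fin n` to `IS m` whose domain equals the domain of `a`. -/
structure PW (m n : ℕ) where
  base : IS n
  fib : Fin n → Option (IS m)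
  dom_eq : ∀ x, (fib x).isSome ↔ (base x).isSome

/-- Multiplication of the partial wreath product: `(f,a)·(g,b) = (f g^a, ab)`. -/
instance {m n : ℕ} : Mul (PW m n) where
  mul u v :=
    { base := u.base * v.base
      fib := fun x => Option.map₂ (· * ·) (u.fib x) ((u.base x).bind v.fib)
      dom_eq := by
        intro x
        show _ ↔ (((u.base x).bind v.base)).isSome
        cases h : u.base x with
        | none =>
          have : u.fib x = none := by
            have := (u.dom_eq x)
            simp [h] at this
            simpa using Option.not_isSome_iff_eq_none.mp (by simp [this])
          simp [h, this, Option.map₂]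
        | some y =>
          have hf : (u.fib x).isSome := (u.dom_eq x).mpr (by simp [h])
          obtain ⟨s, hs⟩ := Option.isSome_iff_exists.mp hf
          cases h2 : v.base y with
          | none =>
            have : v.fib y = none := by
              have := (v.dom_eq y)
              simp [h2] at this
              simpa using Option.not_isSome_iff_eq_none.mp (by simp [this])
            simp [h, h2, hs, this, Option.map₂]
          | some z =>
            have hg : (v.fib y).isSome := (v.dom_eq y).mpr (by simp [h2])
            obtain ⟨t, ht⟩ := Option.isSome_iff_exists.mp hg
            simp [h, h2, hs, ht, Option.map₂] }

/-- The identity of the partial wreath product. -/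
instance {m n : ℕ} : One (PW m n) where
  one :=
    { base := 1
      fib := fun _ => some 1
      dom_eq := by intro x; simp; rfl }

/-- `chainFun L j x`: with `L` listing the elements of a block in increasing order and
`0 ≤ j < |L|` (`j` is the 0-based version of the paper's index), this is the value at `x` of
the chain `a_{i,j}`: the partial bijection with domain everything except `L[j]`,
sending `L[l] ↦ L[l+1]` for `l < j` and fixing all other points. -/
def chainFun {n : ℕ} (L : List (Fin n)) (j : ℕ) (x : Fin n) : Option (Fin n) :=
  if x ∈ L then
    if L.idxOf x = j then none
    else if L.idxOf x < j then L[L.idxOf x + 1]?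
    else some x
  else some x

/-- The generators `a_{i,j}` attached to an ordered decomposition with blocks `B i`. -/
def RGens {n s : ℕ} (B : Fin s → List (Fin n)) : Set (IS n) :=
  {a : IS n | ∃ i : Fin s, ∃ j : ℕ, j < (B i).length ∧ ∀ x, a x = chainFun (B i) j x}

/-- `R(M⃗₁, …, M⃗ₛ)`: the subsemigroup of `IS n` generated by the chains `a_{i,j}`
together with the identity map. -/
def RSec {n s : ℕ} (B : Fin s → List (Fin n)) : Set (IS n) :=
  (Subsemigroup.closure (RGens B ∪ {1}) : Subsemigroup (IS n))

/-- A decomposition of `Fin n` into disjoint nonempty blocks, each block equipped with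
a linear order, recorded by listing the elements of each block in increasing order. -/
structure OrderedPartition (n s : ℕ) where
  B : Fin s → List (Fin n)
  nonempty : ∀ i, B i ≠ []
  nodup : ∀ i, (B i).Nodup
  disjoint : ∀ i j, i ≠ j → ∀ x, x ∈ B i → x ∉ B j
  cover : ∀ x, ∃ i, x ∈ B i

/-- The chain `a_{i,j}` of the block listed by `L`, viewed inside `IS(M_i)`, i.e. embedded
into `IS n` as a partial bijection whose domain is contained in the block: it is defined on
`L` minus `L[j]`, sends `L[l] ↦ L[l+1]` for `l < j` and fixes the other points of `L`. -/
def chainFunB {n : ℕ} (L : List (Fin n)) (j : ℕ) (x : Fin n) : Option (Fin n) :=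
  if x ∈ L then
    if L.idxOf x = j then none
    else if L.idxOf x < j then L[L.idxOf x + 1]?
    else some x
  else none

/-- The generators of `R(M⃗)` inside `IS(M)` (embedded in `IS n`), `M` listed by `L`. -/
def BlockGens {n : ℕ} (L : List (Fin n)) : Set (IS n) :=
  {a : IS n | ∃ j : ℕ, j < L.length ∧ ∀ x, a x = chainFunB L j x}

/-- The identity of `IS(M)` (embedded in `IS n`): the identity map of the block listed by `L`. -/
def idOn {n : ℕ} (L : List (Fin n)) : Set (IS n) :=
  {a : IS n | ∀ x, a x = if x ∈ L then some x else none}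

/-- The R-cross-section `R(M⃗)` of `IS(M)`, embedded into `IS n`, for the block listed by `L`. -/
def RSecBlock {n : ℕ} (L : List (Fin n)) : Set (IS n) :=
  (Subsemigroup.closure (BlockGens L ∪ idOn L) : Subsemigroup (IS n))

/-- The wreath product `R_i ≀_p R(M⃗_i)` where `R(M⃗_i) ⊆ IS(M_i)`, `M_i` listed by `L`,
and `R_i = T ⊆ IS m`, realized inside `PW m n` via the natural embedding
`IS m ≀_p IS(M_i) ⊆ IS m ≀_p IS n`. -/
def WBlock (m n : ℕ) (L : List (Fin n)) (T : Set (IS m)) : Set (PW m n) :=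
  {u : PW m n | u.base ∈ RSecBlock L ∧ ∀ x f, u.fib x = some f → f ∈ T}

/-- The element `e' = (0̄, 1)` of `IS m ≀_p IS n`: the second component is the identity of
`IS n` and the first component sends every point to the empty map `0` of `IS m`. -/
def ezero (m n : ℕ) : PW m n where
  base := 1
  fib := fun _ => some ⊥
  dom_eq := by intro x; simp; rfl


/- ----------  auxiliary lemmas for STATEMENT 0 ---------- -/

lemma IS_mul_apply {n : ℕ} (a b : IS n) (x : Fin n) : (a * b) x = (a x).bind b := rfl

lemma PW.ext' {m n : ℕ} {u v : PW m n} (hb : u.base = v.base) (hf : u.fib = v.fib) :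
    u = v := by
  cases u; cases v; cases hb; cases hf; rfl

lemma PW.mul_base {m n : ℕ} (u v : PW m n) : (u * v).base = u.base * v.base := rfl

lemma PW.mul_fib {m n : ℕ} (u v : PW m n) (x : Fin n) :
    (u * v).fib x = Option.map₂ (· * ·) (u.fib x) ((u.base x).bind v.fib) := rfl

lemma PW.fib_none {m n : ℕ} (u : PW m n) {x : Fin n} (h : u.base x = none) :
    u.fib x = none := by
  have := u.dom_eq x
  rw [h] at this
  simpa using Option.not_isSome_iff_eq_none.mp (by simp [this])

lemma PW.mul_assoc' {m n : ℕ} (u v w : PW m n) : u * v * w = u * (v * w) := by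
  apply PW.ext'
  · exact PEquiv.trans_assoc _ _ _
  · funext x
    simp only [PW.mul_fib, PW.mul_base, IS_mul_apply]
    cases hu : u.base x with
    | none => simp [PW.fib_none u hu, Option.map₂]
    | some y =>
      simp only [Option.bind_some]
      cases hf : u.fib x with
      | none => simp [Option.map₂]
      | some f =>
        cases hg : v.fib y with
        | none =>
          have : v.base y = none := by
            by_contra h
            have := (v.dom_eq y).mpr (Option.ne_none_iff_isSome.mp h)
            simp [hg] at this
          simp [this, hg, Option.map₂]
        | some g =>
          cases hb : v.base y with
          | none => simp [PW.fib_none v hb] at hg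
          | some z =>
            cases hw : w.fib z with
            | none => simp [Option.map₂, hb, hw]
            | some h =>
              simp only [Option.map₂, Option.bind_some, hb, hw]
              simp only [Option.bind_some, Option.map_some]
              exact congrArg some (PEquiv.trans_assoc f g h)

lemma PW.mul_one' {m n : ℕ} (u : PW m n) : u * 1 = u := by
  apply PW.ext'
  · exact PEquiv.trans_refl _
  · funext x
    show Option.map₂ (· * ·) (u.fib x) ((u.base x).bind (fun _ => some 1)) = u.fib x
    cases hb : u.base x with
    | none => simp [PW.fib_none u hb, Option.map₂]
    | some y =>
      cases hf : u.fib x with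
      | none => simp [Option.map₂]
      | some f =>
        simp only [Option.map₂, Option.bind_some, Option.bind_some, Option.map_some]
        exact congrArg some (PEquiv.trans_refl f)

lemma pdom_mul_subset {n : ℕ} (a b : IS n) : pdom (a * b) ⊆ pdom a := by
  intro x hx
  simp only [pdom, Set.mem_setOf_eq, IS_mul_apply] at hx ⊢
  cases h : a x with
  | none => simp [h] at hx
  | some y => simp

lemma trans_symm_trans {n : ℕ} (f g : IS n) (h : pdom f = pdom g) :
    g * ((g.symm.trans f : PEquiv (Fin n) (Fin n)) : IS n) = f := by
  apply PEquiv.ext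
  intro z
  show ((g z).bind (g.symm.trans f)) = f z
  cases hg : g z with
  | none =>
    have : z ∉ pdom g := by simp [pdom, hg]
    rw [← h] at this
    simp only [pdom, Set.mem_setOf_eq, Option.isSome_iff_exists, not_exists] at this
    cases hf : f z with
    | none => simp
    | some w => exact absurd hf (this w)
  | some w =>
    have : g.symm w = some z := (PEquiv.eq_some_iff g).mpr hg
    simp [PEquiv.trans, this]

/-- From a factorization `u = v * s` : domain inclusion on bases. -/
lemma factor_dom {m n : ℕ} {u v s : PW m n} (h : u = v * s) :
    ∀ x, (u.base x).isSome → (v.base x).isSome := by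
  intro x hx
  rw [h, PW.mul_base, IS_mul_apply] at hx
  cases hv : v.base x with
  | none => simp [hv] at hx
  | some y => simp

/-- From a factorization `u = v * s` : domain inclusion on fibers. -/
lemma factor_fib {m n : ℕ} {u v s : PW m n} (h : u = v * s) :
    ∀ z f g, u.fib z = some f → v.fib z = some g → pdom f ⊆ pdom g := by
  intro z f g hf hg
  rw [h, PW.mul_fib, hg] at hf
  cases hb : (v.base z).bind s.fib with
  | none => simp [hb, Option.map₂] at hf
  | some hh =>
    simp only [hb, Option.map₂, Option.bind_some, Option.bind_some, Option.map_some,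
      Option.some.injEq] at hf
    rw [← hf]
    exact pdom_mul_subset g hh

/-- The witness `s = v⁻¹ u` used to factor `u = v * s`. -/
def rfac {m n : ℕ} (u v : PW m n) : PW m n where
  base := v.base.symm.trans u.base
  fib := fun y => (v.base.symm y).bind
    (fun x => Option.map₂ (fun g f => (g : IS m).symm.trans f) (v.fib x) (u.fib x))
  dom_eq := by
    intro y
    show _ ↔ ((v.base.symm y).bind u.base).isSome
    cases hs : v.base.symm y with
    | none => simp [hs]
    | some x =>
      have hvb : v.base x = some y := (PEquiv.eq_some_iff v.base).mp hs
      have hv : (v.fib x).isSome := (v.dom_eq x).mpr (by simp [hvb])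
      obtain ⟨g, hg⟩ := Option.isSome_iff_exists.mp hv
      simp only [hs, Option.bind_some, hg]
      cases hu : u.fib x with
      | none =>
        have : u.base x = none := by
          by_contra hc
          have := (u.dom_eq x).mpr (Option.ne_none_iff_isSome.mp hc)
          simp [hu] at this
        simp [this, Option.map₂]
      | some f =>
        have : (u.base x).isSome := (u.dom_eq x).mp (by simp [hu])
        simp [Option.map₂, this]

lemma factor_exists {m n : ℕ} (u v : PW m n)
    (h1 : ∀ x, (u.base x).isSome → (v.base x).isSome)
    (h2 : ∀ z, (u.base z).isSome →
      ∀ f g : IS m, u.fib z = some f → v.fib z = some g → pdom f = pdom g) :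
    u = v * rfac u v := by
  apply PW.ext'
  · apply PEquiv.ext
    intro x
    rw [PW.mul_base, IS_mul_apply]
    cases hv : v.base x with
    | none =>
      have : u.base x = none := by
        by_contra hc
        have := h1 x (Option.ne_none_iff_isSome.mp hc)
        simp [hv] at this
      simp [this]
    | some y =>
      have hs : v.base.symm y = some x := (PEquiv.eq_some_iff v.base).mpr hv
      show u.base x = ((v.base.symm.trans u.base : PEquiv (Fin n) (Fin n)) y)
      simp [PEquiv.trans, hs]
  · funext x
    rw [PW.mul_fib]
    cases hv : v.base x with
    | none =>
      have hu : u.base x = none := by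
        by_contra hc
        have := h1 x (Option.ne_none_iff_isSome.mp hc)
        simp [hv] at this
      simp [PW.fib_none u hu, PW.fib_none v hv, Option.map₂]
    | some y =>
      have hs : v.base.symm y = some x := (PEquiv.eq_some_iff v.base).mpr hv
      obtain ⟨g, hg⟩ := Option.isSome_iff_exists.mp ((v.dom_eq x).mpr (by simp [hv]))
      have hrf : (rfac u v).fib y
          = Option.map₂ (fun g f => (g : IS m).symm.trans f) (v.fib x) (u.fib x) := by
        show (v.base.symm y).bind _ = _
        rw [hs, Option.bind_some]
      cases hu : u.fib x with
      | none => simp [hv, hg, hrf, hu, Option.map₂]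
      | some f =>
        have hub : (u.base x).isSome := (u.dom_eq x).mp (by simp [hu])
        have hpd : pdom f = pdom g := h2 x hub f g hu hg
        simp only [hv, Option.bind_some, hrf, hg, hu, Option.map₂, Option.bind_some,
          Option.map_some]
        exact (congrArg some (trans_symm_trans f g hpd)).symm

/-- `(f,a) R (g,b)` in `IS m ≀_p IS n` iff `dom a = dom b` and
`dom (f z) = dom (g z)` for every `z ∈ dom a`. -/
theorem greenR_wreath_iff (m n : ℕ) (u v : PW m n) :
    GreenR u v ↔
      (pdom u.base = pdom v.base ∧
        ∀ z : Fin n, (u.base z).isSome →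
          ∀ f g : IS m, u.fib z = some f → v.fib z = some g → pdom f = pdom g) := by
  constructor
  · intro h
    have hu : u ∈ {w | ∃ s, w = v * s} := by
      rw [← h]; exact ⟨1, (PW.mul_one' u).symm⟩
    have hv : v ∈ {w | ∃ s, w = u * s} := by
      rw [h]; exact ⟨1, (PW.mul_one' v).symm⟩
    obtain ⟨s, hs⟩ := hu
    obtain ⟨t, ht⟩ := hv
    constructor
    · apply Set.eq_of_subset_of_subset
      · exact fun x hx => factor_dom hs x hx
      · exact fun x hx => factor_dom ht x hx
    · intro z _ f g hf hg
      exact Set.eq_of_subset_of_subset (factor_fib hs z f g hf hg)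
        (factor_fib ht z g f hg hf)
  · rintro ⟨hdom, hfib⟩
    have h1 : ∀ x, (u.base x).isSome → (v.base x).isSome := by
      intro x hx
      exact (Set.ext_iff.mp hdom x).mp hx
    have h1' : ∀ x, (v.base x).isSome → (u.base x).isSome := by
      intro x hx
      exact (Set.ext_iff.mp hdom x).mpr hx
    have hs := factor_exists u v h1 hfib
    have ht := factor_exists v u h1'
      (fun z hz g f hg hf => (hfib z (h1' z hz) f g hf hg).symm)
    apply Set.eq_of_subset_of_subset
    · rintro w ⟨s₀, rfl⟩
      refine ⟨rfac u v * s₀, ?_⟩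
      conv_lhs => rw [hs]
      exact PW.mul_assoc' v (rfac u v) s₀
    · rintro w ⟨s₀, rfl⟩
      refine ⟨rfac v u * s₀, ?_⟩
      conv_lhs => rw [ht]
      exact PW.mul_assoc' u (rfac v u) s₀

end ISW
end
end

section
/- Every R-cross-section of IS_n is of the form R(M⃗_1, M⃗_2, …, M⃗_s) for some decomposition N_n = M_1 ⊔ M_2 ⊔ … ⊔ M_s into nonempty blocks and some linear orders on the elements of every block. -/
open scoped Classical

noncomputable section
namespace ISW

section Aux
variable {n : ℕ}

@[simp] lemma mul_apply (u v : IS n) (x : Fin n) : (u * v) x = (u x).bind v := rfl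

@[simp] lemma one_apply (x : Fin n) : (1 : IS n) x = some x := rfl

lemma is_mul_assoc (u v w : IS n) : u * v * w = u * (v * w) := PEquiv.trans_assoc u v w

lemma IS.inj {u : IS n} {x x' w : Fin n} (h : u x = some w) (h' : u x' = some w) : x = x' :=
  PEquiv.inj u (Option.mem_def.2 h) (Option.mem_def.2 h')

lemma mem_pdom {u : IS n} {x : Fin n} : x ∈ pdom u ↔ ∃ w, u x = some w := by
  simp [pdom, Option.isSome_iff_exists]

lemma not_mem_pdom {u : IS n} {x : Fin n} : x ∉ pdom u ↔ u x = none := by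
  rw [pdom]; cases h : u x <;> simp [h, Set.mem_setOf_eq]

lemma pdom_one : pdom (1 : IS n) = Set.univ := by
  ext x; simp [pdom]

/-- Green's R relation is equality of domains. -/
lemma greenR_iff (u v : IS n) : GreenR u v ↔ pdom u = pdom v := by
  have key : ∀ a : IS n, {w : IS n | ∃ s, w = a * s} = {w | pdom w ⊆ pdom a} := by
    intro a
    ext w
    constructor
    · rintro ⟨s, rfl⟩
      intro x hx
      rcases mem_pdom.1 hx with ⟨b, hb⟩
      rcases (PEquiv.trans_eq_some _ _ _ _).1 hb with ⟨c, hc, -⟩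
      exact mem_pdom.2 ⟨c, hc⟩
    · intro hw
      refine ⟨a.symm.trans w, PEquiv.ext fun x => ?_⟩
      show w x = (a x).bind fun y => (a.symm y).bind w
      cases ha : a x with
      | none =>
        have hxa : x ∉ pdom a := not_mem_pdom.2 ha
        have : x ∉ pdom w := fun hx => hxa (hw hx)
        simpa using not_mem_pdom.1 this
      | some y =>
        have : a.symm y = some x := a.eq_some_iff.2 ha
        simp [this]
  constructor
  · intro h
    rw [GreenR, key, key] at h
    have h1 : pdom u ⊆ pdom v := by
      have : u ∈ {w : IS n | pdom w ⊆ pdom v} := by rw [← h]; exact fun x hx => hx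
      exact this
    have h2 : pdom v ⊆ pdom u := by
      have : v ∈ {w : IS n | pdom w ⊆ pdom u} := by rw [h]; exact fun x hx => hx
      exact this
    exact le_antisymm h1 h2
  · intro h
    rw [GreenR, key, key, h]

/-- partial identity on a set -/
def pe (D : Set (Fin n)) : IS n where
  toFun x := if x ∈ D then some x else none
  invFun x := if x ∈ D then some x else none
  inv a b := by
    by_cases ha : a ∈ D <;> by_cases hb : b ∈ D <;>
        simp [ha, hb, Option.mem_def, eq_comm] <;> rintro rfl
    · exact hb ha
    · exact ha hb

@[simp] lemma pe_apply (D : Set (Fin n)) (x : Fin n) :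
    pe D x = if x ∈ D then some x else none := rfl

@[simp] lemma pdom_pe (D : Set (Fin n)) : pdom (pe D) = D := by
  ext x; by_cases h : x ∈ D <;> simp [pdom, h]

end Aux
section Cross
variable {n : ℕ} {T : Set (IS n)}

instance : Finite (IS n) :=
  Finite.of_injective (fun f => (f : Fin n → Option (Fin n)))
    (fun f g h => PEquiv.ext (congrFun h))

/-- uniqueness: two elements of T with the same domain coincide -/
lemma uniqT (hT : IsRCrossSection T) {u v : IS n} (hu : u ∈ T) (hv : v ∈ T)
    (h : pdom u = pdom v) : u = v := by
  obtain ⟨t, -, huniq⟩ := hT.2 u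
  have h1 := huniq u ⟨hu, (greenR_iff u u).2 rfl⟩
  have h2 := huniq v ⟨hv, (greenR_iff u v).2 h⟩
  rw [h1, h2]

/-- idempotents are partial identities -/
lemma idem_apply {γ : IS n} (hγ : γ * γ = γ) {x w : Fin n} (h : γ x = some w) :
    w = x := by
  have : (γ * γ) x = γ x := by rw [hγ]
  rw [mul_apply, h] at this
  simp only [Option.bind_some] at this
  exact IS.inj this h

lemma one_memT (hT : IsRCrossSection T) : (1 : IS n) ∈ T := by
  obtain ⟨t, ⟨ht, hg⟩, -⟩ := hT.2 (1 : IS n)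
  have hdt : pdom t = Set.univ := by
    rw [← ((greenR_iff _ _).1 hg), pdom_one]
  have hsq : t * t = t := by
    refine uniqT hT (hT.1 t ht t ht) ht ?_
    ext x
    rcases mem_pdom.1 (hdt ▸ Set.mem_univ x : x ∈ pdom t) with ⟨w, hw⟩
    rcases mem_pdom.1 (hdt ▸ Set.mem_univ w : w ∈ pdom t) with ⟨w2, hw2⟩
    simp [pdom, Set.mem_setOf_eq, mul_apply, hw, hw2]
  have : t = 1 := by
    refine PEquiv.ext fun x => ?_
    rcases mem_pdom.1 (hdt ▸ Set.mem_univ x : x ∈ pdom t) with ⟨w, hw⟩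
    have hwx : w = x := idem_apply hsq hw
    rw [one_apply, hw, hwx]
  rw [← this]; exact ht

/-- powers (exponent ≥ 1 intended) -/
def ppow (u : IS n) : ℕ → IS n
  | 0 => 1
  | k+1 => ppow u k * u

lemma ppow_succ (u : IS n) (k : ℕ) : ppow u (k+1) = ppow u k * u := rfl

lemma ppow_one (u : IS n) : ppow u 1 = u := by
  refine PEquiv.ext fun x => ?_
  show ((1 : IS n) x).bind u = u x
  simp

lemma ppow_add (u : IS n) (s t : ℕ) : ppow u (s + t) = ppow u s * ppow u t := by
  induction t with
  | zero =>
    refine PEquiv.ext fun x => ?_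
    show (ppow u s) x = ((ppow u s) x).bind _
    cases h : (ppow u s) x with
    | none => simp
    | some w => show some w = (1 : IS n) w; simp
  | succ t ih =>
    show ppow u (s+t) * u = _
    rw [ih, is_mul_assoc]; rfl

lemma ppow_mem (hT : IsRCrossSection T) {u : IS n} (hu : u ∈ T) :
    ∀ k, 1 ≤ k → ppow u k ∈ T := by
  intro k
  induction k with
  | zero => omega
  | succ k ih =>
    intro _
    rcases Nat.eq_zero_or_pos k with h | h
    · subst h; rw [ppow_one]; exact hu
    · exact hT.1 _ (ih h) _ hu

lemma pdom_ppow_mono (u : IS n) {k : ℕ} {x : Fin n} (h : x ∈ pdom (ppow u (k+1))) :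
    x ∈ pdom (ppow u k) := by
  rcases mem_pdom.1 h with ⟨w, hw⟩
  rcases (PEquiv.trans_eq_some _ _ _ _).1 hw with ⟨c, hc, -⟩
  exact mem_pdom.2 ⟨c, hc⟩

lemma pdom_ppow_le (u : IS n) {j k : ℕ} (hjk : j ≤ k) {x : Fin n}
    (h : x ∈ pdom (ppow u k)) : x ∈ pdom (ppow u j) := by
  induction k with
  | zero => have : j = 0 := by omega
            rw [this]; exact h
  | succ k ih =>
    rcases Nat.eq_or_lt_of_le hjk with rfl | hlt
    · exact h
    · exact ih (by omega) (pdom_ppow_mono u h)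

/-- there is an idempotent power -/
lemma exists_idem_pow (u : IS n) : ∃ m, 1 ≤ m ∧ ppow u m * ppow u m = ppow u m := by
  obtain ⟨i, j, hne, hij⟩ := Finite.exists_ne_map_eq_of_infinite (ppow u)
  wlog hlt : i < j generalizing i j
  · exact this j i hne.symm hij.symm (by omega)
  set p := j - i with hp
  have hp1 : 1 ≤ p := by omega
  have step : ∀ t, i ≤ t → ppow u (t + p) = ppow u t := by
    intro t ht
    have h1 : t + p = (t - i) + j := by omega
    rw [h1, ppow_add, ← hij, ← ppow_add]
    congr 1; omega
  have step2 : ∀ c t, i ≤ t → ppow u (t + c * p) = ppow u t := by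
    intro c
    induction c with
    | zero => intro t ht; simp
    | succ c ih =>
      intro t ht
      have h2 : t + (c+1) * p = (t + c * p) + p := by ring
      rw [h2, step _ (by omega), ih t ht]
  refine ⟨(i+1) * p, by nlinarith, ?_⟩
  rw [← ppow_add, step2 (i+1) ((i+1)*p) (by nlinarith)]

/-- Key periodicity lemma: if all powers of u∈T are defined at v then u fixes v. -/
lemma fix_of_all_pow (hT : IsRCrossSection T) {u : IS n} (hu : u ∈ T) {v : Fin n}
    (h : ∀ t, 1 ≤ t → v ∈ pdom (ppow u t)) : u v = some v := by
  obtain ⟨m, hm1, hidem⟩ := exists_idem_pow u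
  have hγT : ppow u m ∈ T := ppow_mem hT hu m hm1
  have hγid : ∀ x w, ppow u m x = some w → w = x := fun x w hw => idem_apply hidem hw
  have hCdom : ∀ x, x ∈ pdom (ppow u m) → x ∈ pdom u := by
    intro x hx
    have h1 : x ∈ pdom (ppow u 1) := pdom_ppow_le u hm1 hx
    rw [ppow_one] at h1; exact h1
  have key : ppow u m * u = ppow u m := by
    refine uniqT hT (hT.1 _ hγT _ hu) hγT ?_
    ext x
    simp only [pdom, Set.mem_setOf_eq, mul_apply]
    constructor
    · intro hx
      cases hγx : ppow u m x with
      | none => rw [hγx] at hx; simp at hx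
      | some w => simp [hγx]
    · intro hx
      have hx' : x ∈ pdom (ppow u m) := hx
      rcases mem_pdom.1 hx' with ⟨w, hw⟩
      have hwx : w = x := hγid _ _ hw
      subst hwx
      rcases mem_pdom.1 (hCdom _ hx') with ⟨z, hz⟩
      rw [hw]; simp [hz]
  have hvC : v ∈ pdom (ppow u m) := h m hm1
  rcases mem_pdom.1 hvC with ⟨w, hw⟩
  have hwv : w = v := hγid _ _ hw
  subst hwv
  have hfin := congrArg (fun f : IS n => f w) key
  simp only [mul_apply, hw, Option.bind_some] at hfin
  exact hfin

end Cross
section Path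
variable {n : ℕ} (T : Set (IS n)) (hT : IsRCrossSection T)

/-- the unique element of `T` with domain `{y}ᶜ` -/
def aEl (y : Fin n) : IS n := (hT.2 (pe {y}ᶜ)).choose

lemma aEl_mem (y : Fin n) : aEl T hT y ∈ T := (hT.2 (pe {y}ᶜ)).choose_spec.1.1

lemma pdom_aEl (y : Fin n) : pdom (aEl T hT y) = {y}ᶜ := by
  have h := (hT.2 (pe {y}ᶜ)).choose_spec.1.2
  have h2 := (greenR_iff _ _).1 h
  rw [pdom_pe] at h2
  exact h2.symm

lemma aEl_self (y : Fin n) : aEl T hT y y = none := by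
  refine not_mem_pdom.1 ?_
  rw [pdom_aEl]; simp

lemma aEl_isSome {y x : Fin n} (h : x ≠ y) : ∃ w, aEl T hT y x = some w := by
  refine mem_pdom.1 ?_
  rw [pdom_aEl]; simpa using h

/-- backwards orbit of y under aEl y -/
def seqA (y : Fin n) : ℕ → Option (Fin n)
  | 0 => some y
  | t+1 => (seqA y t).bind (fun w => (aEl T hT y).symm w)

lemma seq_back {y : Fin n} {t : ℕ} {v : Fin n} (h : seqA T hT y (t+1) = some v) :
    ∃ w, seqA T hT y t = some w ∧ aEl T hT y v = some w := by
  rcases Option.bind_eq_some_iff.1 h with ⟨w, hw, hsymm⟩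
  exact ⟨w, hw, (aEl T hT y).eq_some_iff.1 hsymm⟩

lemma seq_isSome_mono {y : Fin n} {t : ℕ} (h : (seqA T hT y (t+1)).isSome) :
    (seqA T hT y t).isSome := by
  rcases Option.isSome_iff_exists.1 h with ⟨v, hv⟩
  rcases seq_back T hT hv with ⟨w, hw, -⟩
  rw [hw]; rfl

lemma seq_isSome_le {y : Fin n} {s t : ℕ} (hst : s ≤ t) (h : (seqA T hT y t).isSome) :
    (seqA T hT y s).isSome := by
  induction t with
  | zero => have : s = 0 := by omega
            rw [this]; exact (by rw [show seqA T hT y 0 = some y from rfl]; rfl)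
  | succ t ih =>
    rcases Nat.eq_or_lt_of_le hst with rfl | hlt
    · exact h
    · exact ih (by omega) (seq_isSome_mono T hT h)

lemma seq_down1 {y : Fin n} {a b : ℕ} (h : seqA T hT y (a+1) = seqA T hT y (b+1))
    (hs : (seqA T hT y (a+1)).isSome) : seqA T hT y a = seqA T hT y b := by
  rcases Option.isSome_iff_exists.1 hs with ⟨v, hv⟩
  rcases seq_back T hT hv with ⟨w, hw, hae⟩
  rcases seq_back T hT (h ▸ hv) with ⟨w', hw', hae'⟩
  have hww : w = w' := by rw [hae] at hae'; exact Option.some.inj hae'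
  rw [hw, hw', hww]

lemma seq_inj {y : Fin n} {a b : ℕ} {v : Fin n} (ha : seqA T hT y a = some v)
    (hb : seqA T hT y b = some v) : a = b := by
  wlog hab : a ≤ b generalizing a b v
  · exact (this hb ha (by omega)).symm
  -- shift down a times
  have key : ∀ k, k ≤ a → seqA T hT y (a - k) = seqA T hT y (b - k) := by
    intro k
    induction k with
    | zero => intro _; simp [ha, hb]
    | succ k ih =>
      intro hk
      have h1 : a - k = (a - (k+1)) + 1 := by omega
      have h2 : b - k = (b - (k+1)) + 1 := by omega
      have h3 := ih (by omega)
      rw [h1, h2] at h3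
      have hsome : (seqA T hT y (a - k)).isSome :=
        seq_isSome_le T hT (Nat.sub_le a k) (by rw [ha]; rfl)
      rw [h1] at hsome
      exact seq_down1 T hT h3 hsome
  have h0 := key a le_rfl
  simp only [Nat.sub_self] at h0
  -- seqA 0 = some y = seqA (b - a)
  by_contra hne
  have hba : 1 ≤ b - a := by omega
  have h4 : seqA T hT y (b - a) = some y := by
    rw [← h0]; rfl
  have h5 : seqA T hT y ((b - a - 1) + 1) = some y := by
    rw [show (b - a - 1) + 1 = b - a by omega]; exact h4
  rcases seq_back T hT h5 with ⟨w, -, hae⟩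
  rw [aEl_self] at hae
  cases hae

lemma seq_exists_none (y : Fin n) : ∃ t, seqA T hT y t = none := by
  by_contra h
  push_neg at h
  have hs : ∀ t, (seqA T hT y t).isSome := fun t => Option.isSome_iff_ne_none.2 (h t)
  obtain ⟨a, b, hne, hab⟩ :=
    Finite.exists_ne_map_eq_of_infinite (fun t => (seqA T hT y t).get (hs t))
  apply hne
  have ha' : seqA T hT y a = some ((seqA T hT y a).get (hs a)) := (Option.some_get (hs a)).symm
  have hb' : seqA T hT y b = some ((seqA T hT y b).get (hs b)) := (Option.some_get (hs b)).symm
  rw [hab] at ha'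
  exact seq_inj T hT ha' hb'

/-- length of the backwards orbit of y -/
def mlen (y : Fin n) : ℕ := Nat.find (seq_exists_none T hT y)

lemma seq_mlen (y : Fin n) : seqA T hT y (mlen T hT y) = none :=
  Nat.find_spec (seq_exists_none T hT y)

lemma seq_lt_mlen {y : Fin n} {t : ℕ} (h : t < mlen T hT y) : (seqA T hT y t).isSome := by
  have := Nat.find_min (seq_exists_none T hT y) h
  exact Option.isSome_iff_ne_none.2 this

lemma mlen_pos (y : Fin n) : 1 ≤ mlen T hT y := by
  rcases Nat.eq_zero_or_pos (mlen T hT y) with h | h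
  · have := seq_mlen T hT y
    rw [h] at this
    simp [seqA] at this
  · exact h

/-- the chain of y : `qf y 1, ..., qf y (mlen y) = y` -/
def qf (y : Fin n) (l : ℕ) : Fin n := (seqA T hT y (mlen T hT y - l)).getD y

lemma qf_spec {y : Fin n} {l : ℕ} (h1 : 1 ≤ l) (h2 : l ≤ mlen T hT y) :
    seqA T hT y (mlen T hT y - l) = some (qf T hT y l) := by
  have hs : (seqA T hT y (mlen T hT y - l)).isSome := seq_lt_mlen T hT (by omega)
  rcases Option.isSome_iff_exists.1 hs with ⟨v, hv⟩
  rw [qf, hv]; rfl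

lemma qf_last (y : Fin n) : qf T hT y (mlen T hT y) = y := by
  rw [qf, Nat.sub_self]; rfl

lemma qf_inj {y : Fin n} {l l' : ℕ} (h1 : 1 ≤ l) (h2 : l ≤ mlen T hT y)
    (h1' : 1 ≤ l') (h2' : l' ≤ mlen T hT y) (h : qf T hT y l = qf T hT y l') : l = l' := by
  have e1 := qf_spec T hT h1 h2
  have e2 := qf_spec T hT h1' h2'
  rw [h] at e1
  have := seq_inj T hT e1 e2
  omega

lemma aEl_qf_step {y : Fin n} {l : ℕ} (h1 : 1 ≤ l) (h2 : l < mlen T hT y) :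
    aEl T hT y (qf T hT y l) = some (qf T hT y (l+1)) := by
  have e1 := qf_spec T hT h1 (le_of_lt h2)
  have e2 := qf_spec T hT (by omega : 1 ≤ l+1) (by omega : l + 1 ≤ mlen T hT y)
  have hrw : mlen T hT y - l = (mlen T hT y - (l+1)) + 1 := by omega
  rw [hrw] at e1
  rcases seq_back T hT e1 with ⟨w, hw, hae⟩
  rw [e2] at hw
  rw [hae, hw]

lemma qf_one_not_ran {y v : Fin n} : aEl T hT y v ≠ some (qf T hT y 1) := by
  intro h
  have hmp := mlen_pos T hT y
  have hsymm : (aEl T hT y).symm (qf T hT y 1) = some v := (aEl T hT y).eq_some_iff.2 h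
  have e1 := qf_spec T hT le_rfl (mlen_pos T hT y)
  have : seqA T hT y (mlen T hT y) = some v := by
    have hrw : mlen T hT y = (mlen T hT y - 1) + 1 := by omega
    rw [hrw]
    show (seqA T hT y (mlen T hT y - 1)).bind _ = some v
    rw [e1]
    simpa using hsymm
  rw [seq_mlen] at this
  cases this

/-- forward orbit reaching `y` means on the chain -/
lemma pow_reach {y : Fin n} : ∀ t, 1 ≤ t → ∀ v : Fin n,
    ppow (aEl T hT y) t v = some y → seqA T hT y t = some v := by
  intro t
  induction t with
  | zero => omega
  | succ t ih =>
    intro _ v h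
    rcases Nat.eq_zero_or_pos t with rfl | ht
    · -- ppow 1 v = aEl y v
      rw [show (0:ℕ)+1 = 1 from rfl, ppow_one] at h
      show (seqA T hT y 0).bind _ = some v
      show (some y).bind (fun w => (aEl T hT y).symm w) = some v
      simpa using (aEl T hT y).eq_some_iff.2 h
    · rw [show t + 1 = 1 + t by omega, ppow_add, ppow_one] at h
      rcases Option.bind_eq_some_iff.1 h with ⟨c, hc, hpc⟩
      have hseq := ih ht c hpc
      show (seqA T hT y t).bind _ = some v
      rw [hseq]
      simpa using (aEl T hT y).eq_some_iff.2 hc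

/-- off the chain, `aEl y` is the identity -/
lemma aEl_off_fixed {y v : Fin n}
    (hoff : ∀ l, 1 ≤ l → l ≤ mlen T hT y → v ≠ qf T hT y l) :
    aEl T hT y v = some v := by
  apply fix_of_all_pow hT (aEl_mem T hT y)
  intro t ht
  induction t with
  | zero => omega
  | succ t ih =>
    rcases Nat.eq_zero_or_pos t with rfl | ht'
    · rw [show (0:ℕ)+1 = 1 from rfl, ppow_one]
      refine mem_pdom.2 (aEl_isSome T hT ?_)
      intro hvy
      exact hoff (mlen T hT y) (mlen_pos T hT y) le_rfl (hvy ▸ (qf_last T hT y).symm)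
    · have hmem := ih ht'
      rcases mem_pdom.1 hmem with ⟨w, hw⟩
      refine mem_pdom.2 ?_
      rw [ppow_succ, mul_apply, hw]
      simp only [Option.bind_some]
      refine aEl_isSome T hT ?_
      intro hwy
      rw [hwy] at hw
      -- ppow t v = some y : v is on the chain, contradiction
      have hseq := pow_reach T hT t ht' v hw
      have htm : t < mlen T hT y := by
        by_contra hge
        have := seq_isSome_le T hT (le_of_not_gt hge) (by rw [hseq]; rfl)
        rw [seq_mlen] at this
        simp at this
      have hv : qf T hT y (mlen T hT y - t) = v := by
        have := qf_spec T hT (y := y) (l := mlen T hT y - t) (by omega) (by omega)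
        rw [show mlen T hT y - (mlen T hT y - t) = t by omega, hseq] at this
        exact (Option.some.inj this).symm
      exact hoff (mlen T hT y - t) (by omega) (by omega) hv.symm

end Path
section Chain
variable {n : ℕ} (T : Set (IS n)) (hT : IsRCrossSection T)

/-- `e` is the chain `p 1 → p 2 → ⋯ → p k` (undefined at `p k`), identity elsewhere -/
def ChainOn (p : ℕ → Fin n) (k : ℕ) (e : IS n) : Prop :=
  (∀ l, 1 ≤ l → l < k → e (p l) = some (p (l+1))) ∧
  e (p k) = none ∧
  (∀ v, (∀ l, 1 ≤ l → l ≤ k → v ≠ p l) → e v = some v)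

/-- F1 : each `aEl y` is a chain along its backwards orbit -/
lemma chain_aEl (y : Fin n) : ChainOn (qf T hT y) (mlen T hT y) (aEl T hT y) :=
  ⟨fun _ h1 h2 => aEl_qf_step T hT h1 h2,
   by rw [qf_last]; exact aEl_self T hT y,
   fun _ hv => aEl_off_fixed T hT hv⟩

lemma path_cases (y v : Fin n) :
    (∃ l, 1 ≤ l ∧ l ≤ mlen T hT y ∧ v = qf T hT y l) ∨
    (∀ l, 1 ≤ l → l ≤ mlen T hT y → v ≠ qf T hT y l) := by
  by_cases h : ∃ l, 1 ≤ l ∧ l ≤ mlen T hT y ∧ v = qf T hT y l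
  · exact Or.inl h
  · right
    push_neg at h
    exact h

/-- every `w ≠ qf y 1` is in the range of `aEl y` -/
lemma aEl_ran {y w : Fin n} (hw : w ≠ qf T hT y 1) : ∃ v, aEl T hT y v = some w := by
  rcases path_cases T hT y w with ⟨l, h1, h2, rfl⟩ | hoff
  · have hl2 : 2 ≤ l := by
      rcases Nat.lt_or_ge l 2 with h | h
      · interval_cases l
        · exact absurd rfl hw
      · exact h
    exact ⟨qf T hT y (l-1), by
      have := aEl_qf_step T hT (y := y) (l := l-1) (by omega) (by omega)
      rw [show l - 1 + 1 = l by omega] at this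
      exact this⟩
  · exact ⟨w, aEl_off_fixed T hT hoff⟩

/-- absorption probe: if the range of `u ∈ T` is inside the domain of `e ∈ T`,
then `e` fixes the range of `u` pointwise. -/
lemma absorb (hT : IsRCrossSection T) {u e : IS n} (hu : u ∈ T) (he : e ∈ T)
    (h : ∀ x w, u x = some w → ∃ zz, e w = some zz) :
    ∀ x w, u x = some w → e w = some w := by
  have hue : u * e = u := by
    refine uniqT hT (hT.1 _ hu _ he) hu ?_
    ext x
    simp only [pdom, Set.mem_setOf_eq, mul_apply]
    constructor
    · intro hx
      cases hux : u x with
      | none => rw [hux] at hx; simp at hx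
      | some w => simp [hux]
    · intro hx
      rcases Option.isSome_iff_exists.1 hx with ⟨w, hw⟩
      rcases h x w hw with ⟨zz, hz⟩
      rw [hw]
      simp [hz]
  intro x w hw
  have := congrArg (fun f : IS n => f x) hue
  simp only [mul_apply, hw, Option.bind_some] at this
  exact this

/-- structure of powers of the chain `aEl y` -/
lemma chain_pow (y : Fin n) : ∀ t, 1 ≤ t → t ≤ mlen T hT y →
    (∀ l, 1 ≤ l → l + t ≤ mlen T hT y →
      ppow (aEl T hT y) t (qf T hT y l) = some (qf T hT y (l+t))) ∧
    (∀ l, 1 ≤ l → l ≤ mlen T hT y → mlen T hT y < l + t →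
      ppow (aEl T hT y) t (qf T hT y l) = none) ∧
    (∀ v, (∀ l, 1 ≤ l → l ≤ mlen T hT y → v ≠ qf T hT y l) →
      ppow (aEl T hT y) t v = some v) := by
  intro t
  induction t with
  | zero => omega
  | succ t ih =>
    intro _ htm
    rcases Nat.eq_zero_or_pos t with rfl | ht'
    · rw [show (0:ℕ)+1 = 1 from rfl, ppow_one]
      refine ⟨fun l h1 h2 => aEl_qf_step T hT (y := y) h1 (by omega), ?_, ?_⟩
      · intro l h1 h2 h3
        have : l = mlen T hT y := by omega
        rw [this, qf_last]
        exact aEl_self T hT y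
      · exact fun v hv => aEl_off_fixed T hT hv
    · obtain ⟨ih1, ih2, ih3⟩ := ih ht' (by omega)
      refine ⟨?_, ?_, ?_⟩
      · intro l h1 h2
        rw [ppow_succ, mul_apply, ih1 l h1 (by omega), Option.bind_some]
        have := aEl_qf_step T hT (y := y) (l := l + t) (by omega) (by omega)
        rw [this, show l + t + 1 = l + (t+1) by omega]
      · intro l h1 h2 h3
        rw [ppow_succ, mul_apply]
        rcases Nat.lt_or_ge (mlen T hT y) (l + t) with h4 | h4
        · rw [ih2 l h1 h2 h4]; rfl
        · have hlt : l + t = mlen T hT y := by omega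
          rw [ih1 l h1 h4, Option.bind_some, hlt, qf_last]
          exact aEl_self T hT y
      · intro v hv
        rw [ppow_succ, mul_apply, ih3 v hv, Option.bind_some]
        exact aEl_off_fixed T hT hv

end Chain
section F2sec
variable {n : ℕ} (T : Set (IS n)) (hT : IsRCrossSection T)

lemma F2 (y : Fin n) : ∀ k, 1 ≤ k → k ≤ mlen T hT y →
    ChainOn (qf T hT y) k (aEl T hT (qf T hT y k)) := by
  intro k
  induction k using Nat.strong_induction_on with
  | _ k IH =>
  intro hk1 hk2
  have hdT : aEl T hT y ∈ T := aEl_mem T hT y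
  have hzT : aEl T hT (qf T hT y k) ∈ T := aEl_mem T hT _
  rcases Nat.eq_or_lt_of_le hk2 with hkm | hkm
  · -- k = mlen y : this is aEl y itself
    subst hkm
    rw [qf_last]
    exact chain_aEl T hT y
  -- now k < mlen y
  have hqinj : ∀ l l', 1 ≤ l → l ≤ mlen T hT y → 1 ≤ l' → l' ≤ mlen T hT y →
      qf T hT y l = qf T hT y l' → l = l' := fun l l' a b c d h => qf_inj T hT a b c d h
  have hyq : ∀ l, 1 ≤ l → l < mlen T hT y → qf T hT y l ≠ y := by
    intro l h1 h2 h
    have h' : qf T hT y l = qf T hT y (mlen T hT y) := h.trans (qf_last T hT y).symm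
    have := hqinj l (mlen T hT y) h1 (by omega) (mlen_pos T hT y) le_rfl h'
    omega
  -- (i) e fixes points off the whole chain of y
  have hoff : ∀ v, (∀ l, 1 ≤ l → l ≤ mlen T hT y → v ≠ qf T hT y l) →
      aEl T hT (qf T hT y k) v = some v := by
    have hpows := chain_pow T hT y (mlen T hT y) (mlen_pos T hT y) le_rfl
    have hcond : ∀ x w, ppow (aEl T hT y) (mlen T hT y) x = some w →
        ∃ zz, aEl T hT (qf T hT y k) w = some zz := by
      intro x w hxw
      rcases path_cases T hT y x with ⟨l, h1, h2, rfl⟩ | hoffx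
      · rw [hpows.2.1 l h1 h2 (by omega)] at hxw; cases hxw
      · rw [hpows.2.2 x hoffx] at hxw
        have hwx : w = x := (Option.some.inj hxw).symm
        subst hwx
        exact aEl_isSome T hT (hoffx k hk1 (le_of_lt hkm))
    have habs := absorb T hT (ppow_mem hT hdT _ (mlen_pos T hT y)) hzT hcond
    intro v hv
    exact habs v v (hpows.2.2 v hv)
  rcases Nat.eq_or_lt_of_le hk1 with hk1' | hk2'
  · -- k = 1
    rw [← hk1']
    refine ⟨fun l h1 h2 => absurd h2 (by omega), aEl_self T hT _, ?_⟩
    intro v hv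
    have hv1 : v ≠ qf T hT y 1 := hv 1 le_rfl le_rfl
    have hcond : ∀ x w, aEl T hT y x = some w →
        ∃ zz, aEl T hT (qf T hT y 1) w = some zz := by
      intro x w hxw
      exact aEl_isSome T hT (fun h => qf_one_not_ran T hT (h ▸ hxw))
    have habs := absorb T hT hdT (aEl_mem T hT _) hcond
    rcases aEl_ran T hT hv1 with ⟨x, hx⟩
    exact habs x v hx
  -- now 2 ≤ k
  have hk2'' : 2 ≤ k := hk2'
  obtain ⟨hE'1, hE'2, hE'3⟩ := IH (k-1) (by omega) (by omega) (by omega)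
  have he'self : aEl T hT (qf T hT y (k-1)) (qf T hT y (k-1)) = none := aEl_self T hT _
  have he'y : aEl T hT (qf T hT y (k-1)) y = some y := by
    refine hE'3 y ?_
    intro l h1 h2 h
    exact hyq l h1 (by omega) h.symm
  -- (ii) the product identity  d * e = e' * d
  have hP : aEl T hT y * aEl T hT (qf T hT y k) =
      aEl T hT (qf T hT y (k-1)) * aEl T hT y := by
    refine uniqT hT (hT.1 _ hdT _ hzT) (hT.1 _ (aEl_mem T hT _) _ hdT) ?_
    ext v
    simp only [pdom, Set.mem_setOf_eq, mul_apply]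
    constructor
    · intro hv
      -- v ∈ pdom (d * e) : show in pdom (e' * d)
      cases hdv : aEl T hT y v with
      | none => rw [hdv] at hv; simp at hv
      | some c =>
        rw [hdv, Option.bind_some] at hv
        have hvy : v ≠ y := by
          intro h; rw [h, aEl_self] at hdv; cases hdv
        have hvk1 : v ≠ qf T hT y (k-1) := by
          intro h
          have hck : c = qf T hT y k := by
            have hst := aEl_qf_step T hT (y := y) (l := k-1) (by omega) (by omega)
            rw [show k-1+1 = k by omega] at hst
            rw [h, hst] at hdv
            exact (Option.some.inj hdv).symm
          rw [hck, aEl_self] at hv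
          simp at hv
        -- e' v is some, and its value is ≠ y
        rcases aEl_isSome T hT (y := qf T hT y (k-1)) hvk1 with ⟨c', hc'⟩
        have hc'y : c' ≠ y := by
          intro h
          rw [h] at hc'
          have := IS.inj hc' he'y
          exact hvy this
        rw [hc', Option.bind_some]
        rcases aEl_isSome T hT (y := y) hc'y with ⟨c'', hc''⟩
        rw [hc'']; rfl
    · intro hv
      cases he'v : aEl T hT (qf T hT y (k-1)) v with
      | none => rw [he'v] at hv; simp at hv
      | some c =>
        rw [he'v, Option.bind_some] at hv
        have hvk1 : v ≠ qf T hT y (k-1) := by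
          intro h; rw [h, he'self] at he'v; cases he'v
        have hcy : c ≠ y := by
          intro h
          rw [h, aEl_self] at hv; simp at hv
        have hvy : v ≠ y := by
          intro h
          rw [h, he'y] at he'v
          exact hcy (Option.some.inj he'v).symm
        rcases aEl_isSome T hT (y := y) hvy with ⟨w, hw⟩
        rw [hw, Option.bind_some]
        have hwqk : w ≠ qf T hT y k := by
          intro h
          have hst := aEl_qf_step T hT (y := y) (l := k-1) (by omega) (by omega)
          rw [show k-1+1 = k by omega] at hst
          rw [h] at hw
          exact hvk1 (IS.inj hw hst)
        rcases aEl_isSome T hT hwqk with ⟨zz, hz⟩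
        rw [hz]; rfl
  -- evaluation consequences of hP
  have hE1 : ∀ l, 2 ≤ l → l ≤ k - 1 →
      aEl T hT (qf T hT y k) (qf T hT y l) = some (qf T hT y (l+1)) := by
    intro l hl1 hl2
    have h1 := congrArg (fun f : IS n => f (qf T hT y (l-1))) hP
    simp only [mul_apply] at h1
    have hst1 := aEl_qf_step T hT (y := y) (l := l-1) (by omega) (by omega)
    rw [show l-1+1 = l by omega] at hst1
    have hst2 := hE'1 (l-1) (by omega) (by omega)
    rw [show l-1+1 = l by omega] at hst2
    rw [hst1, hst2, Option.bind_some, Option.bind_some,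
      aEl_qf_step T hT (y := y) (l := l) (by omega) (by omega)] at h1
    exact h1
  have hE2 : ∀ l, k+1 ≤ l → l ≤ mlen T hT y →
      aEl T hT (qf T hT y k) (qf T hT y l) = some (qf T hT y l) := by
    intro l hl1 hl2
    have h1 := congrArg (fun f : IS n => f (qf T hT y (l-1))) hP
    simp only [mul_apply] at h1
    have hst1 := aEl_qf_step T hT (y := y) (l := l-1) (by omega) (by omega)
    rw [show l-1+1 = l by omega] at hst1
    have hst2 : aEl T hT (qf T hT y (k-1)) (qf T hT y (l-1)) = some (qf T hT y (l-1)) := by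
      refine hE'3 _ ?_
      intro l' h1' h2' h
      have := hqinj (l-1) l' (by omega) (by omega) h1' (by omega) h
      omega
    rw [hst1, hst2, Option.bind_some, Option.bind_some, hst1] at h1
    exact h1
  -- (iii) e (q 1) is q 1 or q 2
  have hq1k : qf T hT y 1 ≠ qf T hT y k := by
    intro h
    have := hqinj 1 k le_rfl (by omega) (by omega) (by omega) h
    omega
  rcases aEl_isSome T hT (y := qf T hT y k) hq1k with ⟨w, hw⟩
  have hw12 : w = qf T hT y 1 ∨ w = qf T hT y 2 := by
    rcases path_cases T hT y w with ⟨l, h1, h2, rfl⟩ | hoffw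
    · rcases Nat.lt_or_ge l 3 with hl3 | hl3
      · interval_cases l
        · exact Or.inl rfl
        · exact Or.inr rfl
      · exfalso
        rcases le_or_gt l k with hlk | hlk
        · have := hE1 (l-1) (by omega) (by omega)
          rw [show l-1+1 = l by omega] at this
          have h3 := IS.inj hw this
          have := hqinj 1 (l-1) le_rfl (by omega) (by omega) (by omega) h3
          omega
        · have := hE2 l (by omega) (by omega)
          have h3 := IS.inj hw this
          have := hqinj 1 l le_rfl (by omega) (by omega) (by omega) h3
          omega
    · exfalso
      have := hoff w hoffw
      have h3 := IS.inj hw this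
      exact hoffw 1 le_rfl (by omega) h3.symm
  rcases hw12 with rfl | rfl
  · -- BAD case : e (q 1) = some (q 1)
    exfalso
    rcases Nat.lt_or_ge k 3 with hk3 | hk3
    · -- k = 2 : power probe
      have hkk : k = 2 := by omega
      subst hkk
      have hm3 : 3 ≤ mlen T hT y := by omega
      -- full description of e
      have hefull : ∀ v, v ≠ qf T hT y 2 → aEl T hT (qf T hT y 2) v = some v := by
        intro v hv
        rcases path_cases T hT y v with ⟨l, h1, h2, rfl⟩ | hoffv
        · rcases Nat.lt_or_ge l 2 with hl2 | hl2
          · interval_cases l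
            exact hw
          · rcases Nat.eq_or_lt_of_le hl2 with hl2' | hl2'
            · exfalso; exact hv (by rw [← hl2'])
            · exact hE2 l (by omega) h2
        · exact hoff v hoffv
      -- A = e * d^(m-2) equals B = d^(m-1); evaluate at q 1
      have hpow2 := chain_pow T hT y (mlen T hT y - 2) (by omega) (by omega)
      have hpow1 := chain_pow T hT y (mlen T hT y - 1) (by omega) (by omega)
      have hAT : aEl T hT (qf T hT y 2) * ppow (aEl T hT y) (mlen T hT y - 2) ∈ T :=
        hT.1 _ hzT _ (ppow_mem hT hdT _ (by omega))
      have hBT : ppow (aEl T hT y) (mlen T hT y - 1) ∈ T := ppow_mem hT hdT _ (by omega)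
      have hAB : aEl T hT (qf T hT y 2) * ppow (aEl T hT y) (mlen T hT y - 2) =
          ppow (aEl T hT y) (mlen T hT y - 1) := by
        refine uniqT hT hAT hBT ?_
        ext v
        simp only [pdom, Set.mem_setOf_eq, mul_apply]
        constructor
        · intro hv
          cases hev : aEl T hT (qf T hT y 2) v with
          | none => rw [hev] at hv; simp at hv
          | some c =>
            rw [hev, Option.bind_some] at hv
            have hv2 : v ≠ qf T hT y 2 := by
              intro h; rw [h, aEl_self] at hev; cases hev
            have hcv : c = v := by
              have hh := hefull v hv2
              rw [hh] at hev
              exact (Option.some.inj hev).symm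
            rw [hcv] at hv
            -- v in pdom d^(m-2), v ≠ q 2 : show v ∈ pdom d^(m-1)
            rcases path_cases T hT y v with ⟨l, h1, h2, rfl⟩ | hoffv
            · have hl2 : l ≠ 2 := fun h => hv2 (by rw [h])
              have hl1 : l = 1 := by
                by_contra hl1
                rw [hpow2.2.1 l h1 h2 (by omega)] at hv
                simp at hv
              subst hl1
              rw [hpow1.1 1 le_rfl (by omega)]; rfl
            · rw [hpow1.2.2 v hoffv]; rfl
        · intro hv
          rcases path_cases T hT y v with ⟨l, h1, h2, rfl⟩ | hoffv
          · have hl1 : l = 1 := by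
              by_contra hl1
              rw [hpow1.2.1 l h1 h2 (by omega)] at hv
              simp at hv
            subst hl1
            have h12 : qf T hT y 1 ≠ qf T hT y 2 := by
              intro h
              have := hqinj 1 2 le_rfl (by omega) (by omega) (by omega) h
              omega
            rw [hefull _ h12, Option.bind_some, hpow2.1 1 le_rfl (by omega)]
            rfl
          · rw [hefull v (hoffv 2 (by omega) (by omega)), Option.bind_some,
              hpow2.2.2 v hoffv]
            rfl
      -- evaluate at q 1
      have h1 := congrArg (fun f : IS n => f (qf T hT y 1)) hAB
      simp only [mul_apply, hw, Option.bind_some] at h1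
      rw [hpow2.1 1 le_rfl (by omega), hpow1.1 1 le_rfl (by omega)] at h1
      have h2 := Option.some.inj h1
      have := hqinj (1 + (mlen T hT y - 2)) (1 + (mlen T hT y - 1))
        (by omega) (by omega) (by omega) (by omega) h2
      omega
    · -- k ≥ 3 : probe with aEl (q 2)
      have hIH2 := IH 2 (by omega) (by omega) (by omega)
      have hcond : ∀ x w', aEl T hT (qf T hT y k) x = some w' →
          ∃ zz, aEl T hT (qf T hT y 2) w' = some zz := by
        intro x w' hxw
        refine aEl_isSome T hT ?_
        intro hw2
        subst hw2
        rcases path_cases T hT y x with ⟨l, h1, h2, rfl⟩ | hoffx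
        · rcases Nat.lt_or_ge l 2 with hl2 | hl2
          · interval_cases l
            rw [hw] at hxw
            have := hqinj 1 2 le_rfl (by omega) (by omega) (by omega)
              (Option.some.inj hxw)
            omega
          · rcases Nat.eq_or_lt_of_le hl2 with hl2' | hl2'
            · -- l = 2 : e (q 2) = some (q 3) by hE1
              subst hl2'
              have h5 := hE1 2 le_rfl (by omega)
              rw [h5] at hxw
              have := hqinj (2+1) 2 (by omega) (by omega) (by omega) (by omega)
                (Option.some.inj hxw)
              omega
            · rcases Nat.lt_or_ge l k with hlk | hlk
              · have := hE1 l (by omega) (by omega)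
                rw [this] at hxw
                have := hqinj (l+1) 2 (by omega) (by omega) (by omega) (by omega)
                  (Option.some.inj hxw)
                omega
              · rcases Nat.eq_or_lt_of_le hlk with hlk' | hlk'
                · rw [← hlk', aEl_self] at hxw
                  cases hxw
                · have := hE2 l (by omega) (by omega)
                  rw [this] at hxw
                  have := hqinj l 2 (by omega) (by omega) (by omega) (by omega)
                    (Option.some.inj hxw)
                  omega
        · have := hoff x hoffx
          rw [this] at hxw
          have hx2 : x = qf T hT y 2 := Option.some.inj hxw
          exact hoffx 2 (by omega) (by omega) hx2
      have habs := absorb T hT hzT (aEl_mem T hT (qf T hT y 2)) hcond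
      have h1 := habs (qf T hT y 1) (qf T hT y 1) hw
      have h2 := hIH2.1 1 le_rfl (by omega)
      rw [h1] at h2
      have := hqinj 1 2 le_rfl (by omega) (by omega) (by omega) (Option.some.inj h2)
      omega
  · -- GOOD case : assemble the chain
    refine ⟨?_, aEl_self T hT _, ?_⟩
    · intro l h1 h2
      rcases Nat.eq_or_lt_of_le h1 with h1' | h1'
      · subst h1'
        simpa using hw
      · exact hE1 l h1' (by omega)
    · intro v hv
      rcases path_cases T hT y v with ⟨l, h1, h2, rfl⟩ | hoffv
      · have hlk : k + 1 ≤ l := by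
          rcases Nat.lt_or_ge l (k+1) with h | h
          · exact absurd rfl (hv l h1 (by omega))
          · exact h
        exact hE2 l hlk h2
      · exact hoff v hoffv

end F2sec
section Struct
variable {n : ℕ} (T : Set (IS n)) (hT : IsRCrossSection T)

/-- a chain representation of `aEl z` is unique: it recovers `mlen` and `qf` -/
lemma chain_unique {p : ℕ → Fin n} {k : ℕ} (hk : 1 ≤ k)
    (hnd : ∀ l l', 1 ≤ l → l ≤ k → 1 ≤ l' → l' ≤ k → p l = p l' → l = l')
    {z : Fin n} (hc : ChainOn p k (aEl T hT z)) :
    mlen T hT z = k ∧ ∀ l, 1 ≤ l → l ≤ k → qf T hT z l = p l := by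
  obtain ⟨hc1, hc2, hc3⟩ := hc
  have hzk : p k = z := by
    by_contra h
    rcases aEl_isSome T hT (y := z) h with ⟨w, hw⟩
    rw [hc2] at hw
    cases hw
  have hseq : ∀ t, t < k → seqA T hT z t = some (p (k - t)) := by
    intro t
    induction t with
    | zero => intro _; rw [Nat.sub_zero, hzk]; rfl
    | succ t ih =>
      intro ht
      have hs := ih (by omega)
      show (seqA T hT z t).bind _ = _
      rw [hs, Option.bind_some]
      have hstep : aEl T hT z (p (k - (t+1))) = some (p (k - t)) := by
        have := hc1 (k - (t+1)) (by omega) (by omega)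
        rw [show k - (t+1) + 1 = k - t by omega] at this
        exact this
      exact (aEl T hT z).eq_some_iff.2 hstep
  have hseqk : seqA T hT z k = none := by
    have hk' : k = (k-1) + 1 := by omega
    rw [hk']
    show (seqA T hT z (k-1)).bind _ = none
    rw [hseq (k-1) (by omega), Option.bind_some, show k - (k-1) = 1 by omega]
    cases hsym : (aEl T hT z).symm (p 1) with
    | none => rfl
    | some v =>
      exfalso
      have hv : aEl T hT z v = some (p 1) := (aEl T hT z).eq_some_iff.1 hsym
      by_cases hon : ∃ l, 1 ≤ l ∧ l ≤ k ∧ v = p l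
      · obtain ⟨l, h1, h2, rfl⟩ := hon
        rcases Nat.eq_or_lt_of_le h2 with rfl | hlk
        · rw [hc2] at hv; cases hv
        · rw [hc1 l h1 hlk] at hv
          have := hnd (l+1) 1 (by omega) (by omega) (by omega) (by omega)
            (Option.some.inj hv)
          omega
      · push_neg at hon
        have := hc3 v hon
        rw [this] at hv
        exact hon 1 (by omega) hk (Option.some.inj hv)
  have hmz : mlen T hT z = k := by
    have h1 : mlen T hT z ≤ k := Nat.find_le hseqk
    have h2 : ¬ (mlen T hT z < k) := by
      intro h
      have := hseq (mlen T hT z) h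
      rw [seq_mlen] at this
      cases this
    omega
  refine ⟨hmz, fun l h1 h2 => ?_⟩
  have := qf_spec T hT (y := z) h1 (by omega)
  rw [hmz, hseq (k - l) (by omega), show k - (k-l) = l by omega] at this
  exact (Option.some.inj this).symm

def inPath (v z : Fin n) : Prop :=
  ∃ l, 1 ≤ l ∧ l ≤ mlen T hT z ∧ qf T hT z l = v

lemma inPath_refl (v : Fin n) : inPath T hT v v :=
  ⟨mlen T hT v, mlen_pos T hT v, le_rfl, qf_last T hT v⟩

lemma inPath_spec {v z : Fin n} (h : inPath T hT v z) :
    mlen T hT v ≤ mlen T hT z ∧ qf T hT z (mlen T hT v) = v ∧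
    ∀ l, 1 ≤ l → l ≤ mlen T hT v → qf T hT v l = qf T hT z l := by
  obtain ⟨l, h1, h2, hv⟩ := h
  have hch := F2 T hT z l h1 h2
  rw [hv] at hch
  have hnd : ∀ a b, 1 ≤ a → a ≤ l → 1 ≤ b → b ≤ l →
      qf T hT z a = qf T hT z b → a = b :=
    fun a b c d e f g => qf_inj T hT c (by omega) e (by omega) g
  obtain ⟨hm, hq⟩ := chain_unique T hT h1 hnd hch
  exact ⟨by omega, by rw [hm]; exact hv, fun l' a b => hq l' a (by omega)⟩

lemma inPath_trans {u v z : Fin n} (h1 : inPath T hT u v) (h2 : inPath T hT v z) :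
    inPath T hT u z := by
  have s1 := inPath_spec T hT h1
  have s2 := inPath_spec T hT h2
  refine ⟨mlen T hT u, mlen_pos T hT u, le_trans s1.1 s2.1, ?_⟩
  rw [← s2.2.2 (mlen T hT u) (mlen_pos T hT u) s1.1]
  · exact s1.2.1

/-- the key comparability lemma: two chains through a common point are nested -/
lemma comparable {v y z : Fin n} (h1 : inPath T hT v y) (h2 : inPath T hT v z) :
    inPath T hT y z ∨ inPath T hT z y := by
  classical
  set S : Finset (Fin n) :=
    Finset.univ.filter (fun w => inPath T hT w y ∧ inPath T hT w z) with hS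
  have hvS : v ∈ S := by simp [hS, h1, h2]
  obtain ⟨w, hwS, hwmax⟩ := S.exists_max_image (fun w => mlen T hT w) ⟨v, hvS⟩
  simp only [hS, Finset.mem_filter, Finset.mem_univ, true_and] at hwS
  obtain ⟨hwy, hwz⟩ := hwS
  have sy := inPath_spec T hT hwy
  have sz := inPath_spec T hT hwz
  rcases Nat.eq_or_lt_of_le sy.1 with hry | hry
  · -- w = y
    left
    have : qf T hT y (mlen T hT y) = w := by rw [← hry]; exact sy.2.1
    rw [qf_last] at this
    rw [this]; exact hwz
  rcases Nat.eq_or_lt_of_le sz.1 with hrz | hrz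
  · right
    have : qf T hT z (mlen T hT z) = w := by rw [← hrz]; exact sz.2.1
    rw [qf_last] at this
    rw [this]; exact hwy
  -- divergence : contradiction
  exfalso
  set r := mlen T hT w with hr
  have hr1 : 1 ≤ r := mlen_pos T hT w
  have hpre : ∀ l, 1 ≤ l → l ≤ r → qf T hT y l = qf T hT z l := by
    intro l a b
    rw [← sy.2.2 l a b, ← sz.2.2 l a b]
  have hbc : qf T hT y (r+1) ≠ qf T hT z (r+1) := by
    intro h
    have hby : inPath T hT (qf T hT y (r+1)) y := ⟨r+1, by omega, by omega, rfl⟩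
    have hbz : inPath T hT (qf T hT y (r+1)) z := ⟨r+1, by omega, by omega, h.symm⟩
    have hmem : qf T hT y (r+1) ∈ S := by simp [hS, hby, hbz]
    have hle := hwmax _ hmem
    -- mlen (q y (r+1)) = r+1
    have hsp := inPath_spec T hT hby
    have : mlen T hT (qf T hT y (r+1)) = r + 1 := by
      refine qf_inj T hT (y := y) (mlen_pos T hT _) (by omega) (by omega) (by omega) ?_
      rw [hsp.2.1]
    omega
  have hchb := F2 T hT y (r+1) (by omega) (by omega)
  have hchc := F2 T hT z (r+1) (by omega) (by omega)
  -- b, c notation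
  set b := qf T hT y (r+1) with hbdef
  set c := qf T hT z (r+1) with hcdef
  have hcoffb : ∀ l, 1 ≤ l → l ≤ r + 1 → c ≠ qf T hT y l := by
    intro l a bb h
    rcases Nat.eq_or_lt_of_le bb with rfl | hlr
    · exact hbc h.symm
    · have h2 := hpre l a (by omega)
      have h3 : qf T hT z (r+1) = qf T hT z l := hcdef.symm.trans (h.trans h2)
      have := qf_inj T hT (y := z) (by omega) (by omega) a (by omega) h3
      omega
  have hboffc : ∀ l, 1 ≤ l → l ≤ r + 1 → b ≠ qf T hT z l := by
    intro l a bb h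
    rcases Nat.eq_or_lt_of_le bb with rfl | hlr
    · exact hbc h
    · have h2 := hpre l a (by omega)
      have h3 : qf T hT y (r+1) = qf T hT y l := hbdef.symm.trans (h.trans h2.symm)
      have := qf_inj T hT (y := y) (by omega) (by omega) a (by omega) h3
      omega
  have hbT : aEl T hT b ∈ T := aEl_mem T hT b
  have hcT : aEl T hT c ∈ T := aEl_mem T hT c
  have hbc' : aEl T hT b c = some c := hchb.2.2 c hcoffb
  have hcb' : aEl T hT c b = some b := hchc.2.2 b hboffc
  have hprod : aEl T hT b * aEl T hT c = aEl T hT c * aEl T hT b := by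
    refine uniqT hT (hT.1 _ hbT _ hcT) (hT.1 _ hcT _ hbT) ?_
    have key : ∀ (b' c' : Fin n), aEl T hT b' c' = some c' → aEl T hT c' b' = some b' →
        pdom (aEl T hT b' * aEl T hT c') = {b', c'}ᶜ := by
      intro b' c' hb'c' hc'b'
      ext x
      simp only [pdom, Set.mem_setOf_eq, mul_apply, Set.mem_compl_iff,
        Set.mem_insert_iff, Set.mem_singleton_iff]
      constructor
      · intro hx
        cases hbx : aEl T hT b' x with
        | none => rw [hbx] at hx; simp at hx
        | some c'' =>
          rw [hbx, Option.bind_some] at hx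
          refine not_or.2 ⟨?_, ?_⟩
          · intro h
            rw [h, aEl_self] at hbx
            cases hbx
          · intro h
            rw [h, hb'c'] at hbx
            have hcc : c'' = c' := (Option.some.inj hbx).symm
            rw [hcc, aEl_self] at hx
            simp at hx
      · intro hx
        push_neg at hx
        rcases aEl_isSome T hT (y := b') hx.1 with ⟨c'', hc''⟩
        have : c'' ≠ c' := by
          intro h
          rw [h] at hc''
          exact hx.2 (IS.inj hc'' hb'c')
        rcases aEl_isSome T hT (y := c') this with ⟨zz, hz⟩
        rw [hc'', Option.bind_some, hz]
        rfl
    rw [key b c hbc' hcb', key c b hcb' hbc']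
    ext x
    simp only [Set.mem_compl_iff, Set.mem_insert_iff, Set.mem_singleton_iff]
    tauto
  -- evaluate at w
  have hwb : aEl T hT b (qf T hT y r) = some b := by
    have := hchb.1 r (by omega) (by omega)
    rw [← hbdef] at this
    exact this
  have hwc : aEl T hT c (qf T hT z r) = some c := by
    have := hchc.1 r (by omega) (by omega)
    rw [← hcdef] at this
    exact this
  have hwyr : qf T hT y r = w := sy.2.1
  have hwzr : qf T hT z r = w := sz.2.1
  have hval := congrArg (fun f : IS n => f w) hprod
  simp only [mul_apply] at hval
  rw [← hwyr, hwb, Option.bind_some, hcb'] at hval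
  rw [hwyr, ← hwzr, hwc, Option.bind_some, hbc'] at hval
  exact hbc (Option.some.inj hval)

/-- the top of the chain through v -/
lemma exists_top (v : Fin n) : ∃ t, inPath T hT v t ∧
    ∀ z, inPath T hT v z → mlen T hT z ≤ mlen T hT t := by
  classical
  set S : Finset (Fin n) := Finset.univ.filter (fun z => inPath T hT v z) with hS
  have hvS : v ∈ S := by simp [hS, inPath_refl]
  obtain ⟨t, htS, htmax⟩ := S.exists_max_image (fun z => mlen T hT z) ⟨v, hvS⟩
  simp only [hS, Finset.mem_filter, Finset.mem_univ, true_and] at htS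
  exact ⟨t, htS, fun z hz => htmax z (by simp [hS, hz])⟩

def topOf (v : Fin n) : Fin n := (exists_top T hT v).choose

lemma topOf_inPath (v : Fin n) : inPath T hT v (topOf T hT v) :=
  (exists_top T hT v).choose_spec.1

lemma topOf_max (v : Fin n) : ∀ z, inPath T hT v z →
    mlen T hT z ≤ mlen T hT (topOf T hT v) :=
  (exists_top T hT v).choose_spec.2

def IsTop (t : Fin n) : Prop := ∀ z, inPath T hT t z → z = t

lemma topOf_isTop (v : Fin n) : IsTop T hT (topOf T hT v) := by
  intro z h
  have h2 : inPath T hT v z := inPath_trans T hT (topOf_inPath T hT v) h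
  have h3 := topOf_max T hT v z h2
  have h4 := (inPath_spec T hT h).1
  have h5 := (inPath_spec T hT h).2.1
  have h6 : mlen T hT (topOf T hT v) = mlen T hT z := by omega
  rw [h6, qf_last] at h5
  exact h5

end Struct
section Lists
variable {n : ℕ} (T : Set (IS n)) (hT : IsRCrossSection T)

def pathL (y : Fin n) : List (Fin n) :=
  (List.range (mlen T hT y)).map (fun i => qf T hT y (i+1))

lemma pathL_length (y : Fin n) : (pathL T hT y).length = mlen T hT y := by
  simp [pathL]

lemma pathL_get (y : Fin n) (i : ℕ) (hi : i < (pathL T hT y).length) :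
    (pathL T hT y)[i] = qf T hT y (i+1) := by
  simp [pathL]

lemma mem_pathL {v y : Fin n} : v ∈ pathL T hT y ↔ inPath T hT v y := by
  simp only [pathL, List.mem_map, List.mem_range]
  constructor
  · rintro ⟨i, hi, rfl⟩
    exact ⟨i+1, by omega, by omega, rfl⟩
  · rintro ⟨l, h1, h2, rfl⟩
    exact ⟨l-1, by omega, by rw [show l-1+1 = l by omega]⟩

lemma pathL_nodup (y : Fin n) : (pathL T hT y).Nodup := by
  refine List.Nodup.map_on ?_ (List.nodup_range)
  intro i hi j hj hij
  simp only [List.mem_range] at hi hj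
  have := qf_inj T hT (y := y) (l := i+1) (l' := j+1)
    (by omega) (by omega) (by omega) (by omega) hij
  omega

lemma pathL_indexOf (y : Fin n) (i : ℕ) (hi : i < mlen T hT y) :
    (pathL T hT y).idxOf (qf T hT y (i+1)) = i := by
  have hlen : (pathL T hT y).length = mlen T hT y := pathL_length T hT y
  have hmem : qf T hT y (i+1) ∈ pathL T hT y :=
    (mem_pathL T hT).2 ⟨i+1, by omega, by omega, rfl⟩
  have hlt : (pathL T hT y).idxOf (qf T hT y (i+1)) < (pathL T hT y).length :=
    List.idxOf_lt_length_iff.2 hmem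
  have h1 : (pathL T hT y)[(pathL T hT y).idxOf (qf T hT y (i+1))] = qf T hT y (i+1) :=
    List.getElem_idxOf hlt
  have h2 : (pathL T hT y)[i]'(by omega) = qf T hT y (i+1) := pathL_get T hT y i (by omega)
  exact ((pathL_nodup T hT y).getElem_inj_iff).1 (h1.trans h2.symm)

/-- the central translation: `aEl` of the `(j+1)`-st point of a chain is the
`j`-th generator `chainFun` of that chain -/
lemma aEl_eq_chainFun (t : Fin n) (j : ℕ) (hj : j < mlen T hT t) (x : Fin n) :
    aEl T hT (qf T hT t (j+1)) x = chainFun (pathL T hT t) j x := by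
  obtain ⟨hc1, hc2, hc3⟩ := F2 T hT t (j+1) (by omega) (by omega)
  by_cases hx : x ∈ pathL T hT t
  · obtain ⟨l, h1, h2, hql⟩ := (mem_pathL T hT).1 hx
    subst hql
    have hidx : (pathL T hT t).idxOf (qf T hT t l) = l - 1 := by
      have := pathL_indexOf T hT t (l-1) (by omega)
      rw [show l-1+1 = l by omega] at this
      exact this
    rw [chainFun, if_pos hx, hidx]
    rcases Nat.lt_trichotomy (l-1) j with hlj | hlj | hlj
    · rw [if_neg (by omega), if_pos hlj]
      have hL : (pathL T hT t)[l-1+1]? = some (qf T hT t (l+1)) := by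
        rw [List.getElem?_eq_getElem (by rw [pathL_length]; omega)]
        rw [pathL_get T hT t (l-1+1) (by rw [pathL_length]; omega),
          show l-1+1+1 = l+1 by omega]
      rw [hL]
      exact hc1 l h1 (by omega)
    · rw [if_pos hlj]
      rw [show l = j+1 by omega]
      exact hc2
    · rw [if_neg (by omega), if_neg (by omega)]
      refine hc3 _ ?_
      intro l' ha hb h
      have := qf_inj T hT (y := t) h1 h2 ha (by omega) h
      omega
  · rw [chainFun, if_neg hx]
    refine hc3 x ?_
    intro l' ha hb h
    exact hx ((mem_pathL T hT).2 ⟨l', ha, by omega, h.symm⟩)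

def TopSet : Finset (Fin n) := Finset.univ.filter (fun t => IsTop T hT t)

lemma topOf_mem_TopSet (v : Fin n) : topOf T hT v ∈ TopSet T hT := by
  simp only [TopSet, Finset.mem_filter, Finset.mem_univ, true_and]
  exact topOf_isTop T hT v

lemma mem_TopSet_isTop {t : Fin n} (h : t ∈ TopSet T hT) : IsTop T hT t := by
  simpa only [TopSet, Finset.mem_filter, Finset.mem_univ, true_and] using h

end Lists
/-- every R-cross-section of `IS n` is of the form `R(M⃗₁, …, M⃗ₛ)` for some
decomposition of `Fin n` into nonempty blocks with linear orders on the blocks. -/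
theorem rcross_eq_rsec (n : ℕ) (T : Set (IS n)) (hT : IsRCrossSection T) :
    ∃ (s : ℕ) (P : OrderedPartition n s), T = RSec P.B := by
  classical
  set eIso := (TopSet T hT).orderIsoOfFin rfl with heIso
  set Bf : Fin (TopSet T hT).card → List (Fin n) :=
    fun i => pathL T hT ((eIso i : Fin n)) with hBf
  -- every aEl u is one of the generators
  have hgen : ∀ u : Fin n, aEl T hT u ∈ RGens Bf := by
    intro u
    have hin := topOf_inPath T hT u
    have hsp := inPath_spec T hT hin
    have hmu := mlen_pos T hT u
    refine ⟨eIso.symm ⟨topOf T hT u, topOf_mem_TopSet T hT u⟩, mlen T hT u - 1, ?_, ?_⟩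
    · simp only [hBf, OrderIso.apply_symm_apply]
      rw [pathL_length]
      omega
    · intro x
      have key := aEl_eq_chainFun T hT (topOf T hT u) (mlen T hT u - 1) (by omega) x
      rw [show mlen T hT u - 1 + 1 = mlen T hT u by omega, hsp.2.1] at key
      simp only [hBf, OrderIso.apply_symm_apply]
      exact key
  -- the subsemigroup with carrier T
  set TS : Subsemigroup (IS n) := ⟨T, fun {a b} ha hb => hT.1 a ha b hb⟩ with hTS
  have hsub : Subsemigroup.closure (RGens Bf ∪ {1}) ≤ TS := by
    apply Subsemigroup.closure_le.2
    rintro g (hg | hg)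
    · obtain ⟨i, j, hj, hgx⟩ := hg
      have hjm : j < mlen T hT (eIso i : Fin n) := by
        simp only [hBf] at hj
        rw [pathL_length] at hj
        exact hj
      have hge : g = aEl T hT (qf T hT (eIso i : Fin n) (j+1)) := by
        apply PEquiv.ext
        intro x
        rw [hgx x]
        exact (aEl_eq_chainFun T hT _ j hjm x).symm
      show g ∈ T
      rw [hge]
      exact aEl_mem T hT _
    · show g ∈ T
      simp only [Set.mem_singleton_iff] at hg
      rw [hg]
      exact one_memT hT
  -- every domain is realized inside the closure
  have hcov : ∀ C : Finset (Fin n), ∃ w : IS n,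
      w ∈ Subsemigroup.closure (RGens Bf ∪ {1}) ∧ w ∈ T ∧ pdom w = (↑C : Set (Fin n))ᶜ := by
    intro C
    induction C using Finset.induction_on with
    | empty =>
      refine ⟨1, Subsemigroup.subset_closure (Or.inr rfl), one_memT hT, ?_⟩
      rw [pdom_one]
      simp
    | @insert x C hx ih =>
      obtain ⟨w', hw'R, hw'T, hw'dom⟩ := ih
      have hxw : x ∈ pdom w' := by
        rw [hw'dom]
        simp [hx]
      obtain ⟨u, hu⟩ := mem_pdom.1 hxw
      refine ⟨w' * aEl T hT u,
        Subsemigroup.mul_mem _ hw'R (Subsemigroup.subset_closure (Or.inl (hgen u))),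
        hT.1 _ hw'T _ (aEl_mem T hT u), ?_⟩
      ext v
      simp only [pdom, Set.mem_setOf_eq, mul_apply, Set.mem_compl_iff,
        Finset.coe_insert, Set.mem_insert_iff, Finset.mem_coe]
      constructor
      · intro hv
        cases hwv : w' v with
        | none =>
          exfalso
          rw [hwv] at hv
          simp at hv
        | some c =>
          rw [hwv, Option.bind_some] at hv
          have hcu : c ≠ u := by
            intro h
            rw [h, aEl_self] at hv
            simp at hv
          have hvx : v ≠ x := by
            intro h
            rw [h, hu] at hwv
            exact hcu (Option.some.inj hwv).symm
          have hvC : v ∉ C := by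
            have : v ∈ pdom w' := mem_pdom.2 ⟨c, hwv⟩
            rw [hw'dom] at this
            simpa using this
          push_neg
          exact ⟨hvx, hvC⟩
      · intro hv
        push_neg at hv
        have hvdom : v ∈ pdom w' := by
          rw [hw'dom]
          simpa using hv.2
        obtain ⟨c, hc⟩ := mem_pdom.1 hvdom
        have hcu : c ≠ u := by
          intro h
          rw [h] at hc
          exact hv.1 (IS.inj hc hu)
        obtain ⟨zz, hz⟩ := aEl_isSome T hT hcu
        rw [hc, Option.bind_some, hz]
        rfl
  refine ⟨(TopSet T hT).card,
    { B := Bf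
      nonempty := ?_
      nodup := fun i => pathL_nodup T hT _
      disjoint := ?_
      cover := ?_ }, ?_⟩
  · intro i hnil
    have hlen := pathL_length T hT (eIso i : Fin n)
    simp only [hBf] at hnil
    rw [hnil] at hlen
    have := mlen_pos T hT (eIso i : Fin n)
    simp at hlen
    omega
  · intro i j hij x hxi hxj
    simp only [hBf] at hxi hxj
    have h1 := (mem_pathL T hT).1 hxi
    have h2 := (mem_pathL T hT).1 hxj
    have htopi := mem_TopSet_isTop T hT (eIso i).2
    have htopj := mem_TopSet_isTop T hT (eIso j).2
    rcases comparable T hT h1 h2 with h | h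
    · have heq : (eIso j : Fin n) = (eIso i : Fin n) := htopi _ h
      exact hij (eIso.injective (Subtype.ext heq)).symm
    · have heq : (eIso i : Fin n) = (eIso j : Fin n) := htopj _ h
      exact hij (eIso.injective (Subtype.ext heq))
  · intro x
    refine ⟨eIso.symm ⟨topOf T hT x, topOf_mem_TopSet T hT x⟩, ?_⟩
    simp only [hBf, OrderIso.apply_symm_apply]
    exact (mem_pathL T hT).2 (topOf_inPath T hT x)
  · -- T = RSec Bf
    apply Set.eq_of_subset_of_subset
    · intro β hβ
      obtain ⟨w, hwR, hwT, hwdom⟩ := hcov (Set.toFinite (pdom β)ᶜ).toFinset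
      have hdd : pdom β = pdom w := by
        rw [hwdom, Set.Finite.coe_toFinset, compl_compl]
      have hβw : β = w := uniqT hT hβ hwT hdd
      rw [hβw]
      exact hwR
    · intro g hg
      exact hsub hg
end ISW
end
end

section
/- Let R = R(M⃗) be a single-block R-cross-section of IS_n, corresponding to the trivial decomposition N_n = M with linear order M = {m_1 < m_2 < … < m_n}. Then for every nonempty subset {m_{j_1}, …, m_{j_k}} of M with j_1 < … < j_k, the unique element a ∈ R with dom(a) = {m_{j_1}, …, m_{j_k}} acts by m_{j_l}·a = m_{n−k+l} for l = 1, …, k. -/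
open scoped Classical

noncomputable section
namespace ISW

/- ===== auxiliary machinery for single_block_action ===== -/

/-- `gg L hlen i` = `L[i]`, the `i`-th element of the ordered block. -/
def gg {n : ℕ} (L : List (Fin n)) (hlen : L.length = n) (i : Fin n) : Fin n :=
  L[(i : ℕ)]'(by rw [hlen]; exact i.isLt)

theorem gg_inj {n : ℕ} {L : List (Fin n)} (hnd : L.Nodup) (hlen : L.length = n) :
    Function.Injective (gg L hlen) := by
  intro i i' he
  have h1 := List.Nodup.idxOf_getElem hnd (i : ℕ) (by rw [hlen]; exact i.isLt)
  have h2 := List.Nodup.idxOf_getElem hnd (i' : ℕ) (by rw [hlen]; exact i'.isLt)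
  have he' : L[(i : ℕ)]'(by rw [hlen]; exact i.isLt) = L[(i' : ℕ)]'(by rw [hlen]; exact i'.isLt) := he
  rw [he'] at h1
  exact Fin.ext (by omega)

/-- The structural invariant of elements of the single-block cross-section: the
domain indices, listed increasingly by `φ`, are moved in order to the top `k` positions. -/
def Good {n : ℕ} (L : List (Fin n)) (hlen : L.length = n) (a : IS n) : Prop :=
  ∃ k : ℕ, ∃ _hk : k ≤ n, ∃ φ : Fin k → Fin n, StrictMono φ ∧
    (∀ l : Fin k, a (gg L hlen (φ l)) =
      some (gg L hlen ⟨n - k + (l : ℕ), by have := l.isLt; omega⟩)) ∧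
    (∀ i : Fin n, i ∉ Set.range φ → a (gg L hlen i) = none)

theorem good_one {n : ℕ} (L : List (Fin n)) (hlen : L.length = n) :
    Good L hlen (1 : IS n) := by
  refine ⟨n, le_refl n, id, strictMono_id, ?_, ?_⟩
  · intro l
    have h : (⟨n - n + (l : ℕ), by have := l.isLt; omega⟩ : Fin n) = l :=
      Fin.ext (show n - n + (l : ℕ) = (l : ℕ) by omega)
    rw [h]; rfl
  · intro i hi
    exact absurd ⟨i, rfl⟩ hi

/-- The index map of the generator `a_j`: skips index `j`. -/
def phiGen (n j : ℕ) (l : Fin (n - 1)) : Fin n :=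
  ⟨if (l : ℕ) < j then (l : ℕ) else (l : ℕ) + 1, by have := l.isLt; split <;> omega⟩

theorem phiGen_val (n j : ℕ) (l : Fin (n - 1)) :
    ((phiGen n j l : Fin n) : ℕ) = if (l : ℕ) < j then (l : ℕ) else (l : ℕ) + 1 := rfl

theorem good_gen {n : ℕ} (L : List (Fin n)) (hnd : L.Nodup) (hlen : L.length = n)
    (j : ℕ) (hj : j < n) (a : IS n) (hax : ∀ x, a x = chainFun L j x) :
    Good L hlen a := by
  have hval : ∀ i : Fin n, a (gg L hlen i) =
      if (i : ℕ) = j then none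
      else if (i : ℕ) < j then L[(i : ℕ) + 1]? else some (gg L hlen i) := by
    intro i
    have hlt : (i : ℕ) < L.length := by rw [hlen]; exact i.isLt
    have hmem : (gg L hlen i) ∈ L := List.getElem_mem hlt
    have hidx : L.idxOf (gg L hlen i) = (i : ℕ) := List.Nodup.idxOf_getElem hnd _ hlt
    rw [hax]
    unfold chainFun
    rw [if_pos hmem, hidx]
  refine ⟨n - 1, by omega, phiGen n j, ?_, ?_, ?_⟩
  · intro l l' h
    have hll : (l : ℕ) < (l' : ℕ) := h
    rw [Fin.lt_def, phiGen_val, phiGen_val]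
    split <;> split <;> omega
  · intro l
    have hl := l.isLt
    rw [hval (phiGen n j l), phiGen_val]
    by_cases hc : (l : ℕ) < j
    · rw [if_pos hc, if_neg (show ¬ (l : ℕ) = j by omega), if_pos hc,
        List.getElem?_eq_getElem (show (l : ℕ) + 1 < L.length by omega)]
      have htar : (⟨n - (n - 1) + (l : ℕ), by omega⟩ : Fin n) = ⟨(l : ℕ) + 1, by omega⟩ :=
        Fin.ext (show n - (n - 1) + (l : ℕ) = (l : ℕ) + 1 by omega)
      rw [htar]
      rfl
    · rw [if_neg hc, if_neg (show ¬ (l : ℕ) + 1 = j by omega),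
        if_neg (show ¬ (l : ℕ) + 1 < j by omega)]
      have htar : (⟨n - (n - 1) + (l : ℕ), by omega⟩ : Fin n) = phiGen n j l :=
        Fin.ext (by
          rw [phiGen_val, if_neg hc]
          exact (show n - (n - 1) + (l : ℕ) = (l : ℕ) + 1 by omega))
      rw [htar]
  · intro i hi
    have hij : (i : ℕ) = j := by
      by_contra hne
      apply hi
      rcases lt_or_gt_of_ne hne with hlt | hgt
      · refine ⟨⟨(i : ℕ), by omega⟩, Fin.ext ?_⟩
        rw [phiGen_val]
        simp only [if_pos hlt]
      · have hin := i.isLt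
        refine ⟨⟨(i : ℕ) - 1, by omega⟩, Fin.ext ?_⟩
        rw [phiGen_val]
        rw [if_neg (show ¬ (i : ℕ) - 1 < j by omega)]
        exact (show (i : ℕ) - 1 + 1 = (i : ℕ) by omega)
    rw [hval i, if_pos hij]

theorem good_mul {n : ℕ} (L : List (Fin n)) (hlen : L.length = n)
    (a b : IS n) (hga : Good L hlen a) (hgb : Good L hlen b) : Good L hlen (a * b) := by
  obtain ⟨ka, hka, φ, hφm, hφv, hφn⟩ := hga
  obtain ⟨kb, hkb, ψ, hψm, hψv, hψn⟩ := hgb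
  have hmul : ∀ x, (a * b) x = (a x).bind b := fun _ => rfl
  by_cases hT : ∃ l' : Fin kb, n - ka ≤ ((ψ l' : Fin n) : ℕ)
  · set T : Finset (Fin kb) := Finset.univ.filter (fun l' => n - ka ≤ ((ψ l' : Fin n) : ℕ))
      with hTdef
    have hne : T.Nonempty := by
      obtain ⟨l', hl'⟩ := hT
      exact ⟨l', Finset.mem_filter.mpr ⟨Finset.mem_univ l', hl'⟩⟩
    set t0 := T.min' hne with ht0def
    have ht0mem : n - ka ≤ ((ψ t0 : Fin n) : ℕ) := (Finset.mem_filter.mp (T.min'_mem hne)).2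
    have key : ∀ l' : Fin kb, (t0 : ℕ) ≤ (l' : ℕ) → n - ka ≤ ((ψ l' : Fin n) : ℕ) :=
      fun l' h => le_trans ht0mem (hψm.monotone (show t0 ≤ l' from h))
    have hmin : ∀ l' : Fin kb, n - ka ≤ ((ψ l' : Fin n) : ℕ) → (t0 : ℕ) ≤ (l' : ℕ) :=
      fun l' h => T.min'_le l' (Finset.mem_filter.mpr ⟨Finset.mem_univ l', h⟩)
    set kc := kb - (t0 : ℕ) with hkcdef
    have hkc : kc ≤ n := by omega
    have h1 : ∀ t : Fin kc, (t0 : ℕ) + (t : ℕ) < kb := by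
      intro t; have := t.isLt; have := t0.isLt; omega
    have h2 : ∀ t : Fin kc, ((ψ ⟨(t0 : ℕ) + (t : ℕ), h1 t⟩ : Fin n) : ℕ) - (n - ka) < ka := by
      intro t
      have hb1 := (ψ ⟨(t0 : ℕ) + (t : ℕ), h1 t⟩).isLt
      have hb2 := key ⟨(t0 : ℕ) + (t : ℕ), h1 t⟩ (by simp)
      omega
    refine ⟨kc, hkc,
      fun t => φ ⟨((ψ ⟨(t0 : ℕ) + (t : ℕ), h1 t⟩ : Fin n) : ℕ) - (n - ka), h2 t⟩, ?_, ?_, ?_⟩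
    · intro t t' h
      beta_reduce
      apply hφm
      rw [Fin.mk_lt_mk]
      have htt : (t : ℕ) < (t' : ℕ) := h
      have hlt : ψ ⟨(t0 : ℕ) + (t : ℕ), h1 t⟩ < ψ ⟨(t0 : ℕ) + (t' : ℕ), h1 t'⟩ :=
        hψm (show (t0 : ℕ) + (t : ℕ) < (t0 : ℕ) + (t' : ℕ) by omega)
      have hb2 := key ⟨(t0 : ℕ) + (t : ℕ), h1 t⟩ (by simp)
      have hb2' := key ⟨(t0 : ℕ) + (t' : ℕ), h1 t'⟩ (by simp)
      have hlt' : ((ψ ⟨(t0 : ℕ) + (t : ℕ), h1 t⟩ : Fin n) : ℕ)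
          < ((ψ ⟨(t0 : ℕ) + (t' : ℕ), h1 t'⟩ : Fin n) : ℕ) := hlt
      omega
    · intro t
      beta_reduce
      have hb2 := key ⟨(t0 : ℕ) + (t : ℕ), h1 t⟩ (by simp)
      have hb3 := (ψ ⟨(t0 : ℕ) + (t : ℕ), h1 t⟩).isLt
      have e1 := hφv ⟨((ψ ⟨(t0 : ℕ) + (t : ℕ), h1 t⟩ : Fin n) : ℕ) - (n - ka), h2 t⟩
      have e2 : (⟨n - ka + (((ψ ⟨(t0 : ℕ) + (t : ℕ), h1 t⟩ : Fin n) : ℕ) - (n - ka)),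
          by omega⟩ : Fin n) = ψ ⟨(t0 : ℕ) + (t : ℕ), h1 t⟩ :=
        Fin.ext (show n - ka + (((ψ ⟨(t0 : ℕ) + (t : ℕ), h1 t⟩ : Fin n) : ℕ) - (n - ka))
          = ((ψ ⟨(t0 : ℕ) + (t : ℕ), h1 t⟩ : Fin n) : ℕ) by omega)
      rw [hmul, e1, e2]
      show b (gg L hlen (ψ ⟨(t0 : ℕ) + (t : ℕ), h1 t⟩)) = _
      rw [hψv ⟨(t0 : ℕ) + (t : ℕ), h1 t⟩]
      have e3 : (⟨n - kb + ((t0 : ℕ) + (t : ℕ)), by have := h1 t; omega⟩ : Fin n) =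
          (⟨n - kc + (t : ℕ), by have := t.isLt; omega⟩ : Fin n) := by
        have ht := t.isLt
        have ht0 := t0.isLt
        exact Fin.ext (show n - kb + ((t0 : ℕ) + (t : ℕ)) = n - kc + (t : ℕ) by omega)
      rw [e3]
    · intro i hi
      rw [hmul]
      by_cases hiφ : i ∈ Set.range φ
      · obtain ⟨l, rfl⟩ := hiφ
        rw [hφv l]
        show b (gg L hlen ⟨n - ka + (l : ℕ), _⟩) = none
        apply hψn
        rintro ⟨l', hl'⟩
        have hval' : ((ψ l' : Fin n) : ℕ) = n - ka + (l : ℕ) := by rw [hl']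
        have hge : (t0 : ℕ) ≤ (l' : ℕ) := hmin l' (by omega)
        have hlt' : (l' : ℕ) - (t0 : ℕ) < kc := by have := l'.isLt; omega
        apply hi
        refine ⟨⟨(l' : ℕ) - (t0 : ℕ), hlt'⟩, ?_⟩
        beta_reduce
        have e4 : (⟨(t0 : ℕ) + (((⟨(l' : ℕ) - (t0 : ℕ), hlt'⟩ : Fin kc)) : ℕ),
            h1 ⟨(l' : ℕ) - (t0 : ℕ), hlt'⟩⟩ : Fin kb) = l' :=
          Fin.ext (show (t0 : ℕ) + ((l' : ℕ) - (t0 : ℕ)) = (l' : ℕ) by omega)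
        have e5 : ψ (⟨(t0 : ℕ) + (((⟨(l' : ℕ) - (t0 : ℕ), hlt'⟩ : Fin kc)) : ℕ),
            h1 ⟨(l' : ℕ) - (t0 : ℕ), hlt'⟩⟩ : Fin kb) = ψ l' := congrArg ψ e4
        have e6 : ((ψ (⟨(t0 : ℕ) + (((⟨(l' : ℕ) - (t0 : ℕ), hlt'⟩ : Fin kc)) : ℕ),
            h1 ⟨(l' : ℕ) - (t0 : ℕ), hlt'⟩⟩ : Fin kb) : Fin n) : ℕ) = n - ka + (l : ℕ) := by
          rw [e5, hval']
        have hlk := l.isLt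
        exact congrArg φ (Fin.ext
          (show ((ψ (⟨(t0 : ℕ) + (((⟨(l' : ℕ) - (t0 : ℕ), hlt'⟩ : Fin kc)) : ℕ),
            h1 ⟨(l' : ℕ) - (t0 : ℕ), hlt'⟩⟩ : Fin kb) : Fin n) : ℕ) - (n - ka) = (l : ℕ)
            by omega))
      · rw [hφn i hiφ]; rfl
  · push_neg at hT
    refine ⟨0, Nat.zero_le n, Fin.elim0, fun t => t.elim0, fun t => t.elim0, ?_⟩
    intro i _
    rw [hmul]
    by_cases hiφ : i ∈ Set.range φ
    · obtain ⟨l, rfl⟩ := hiφ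
      rw [hφv l]
      show b (gg L hlen ⟨n - ka + (l : ℕ), _⟩) = none
      apply hψn
      rintro ⟨l', hl'⟩
      have h0 := hT l'
      have h0' : ((ψ l' : Fin n) : ℕ) = n - ka + (l : ℕ) := by rw [hl']
      omega
    · rw [hφn i hiφ]; rfl

theorem good_of_mem {n : ℕ} (L : List (Fin n)) (hnd : L.Nodup) (hlen : L.length = n)
    (a : IS n) (ha : a ∈ RSec (fun _ : Fin 1 => L)) : Good L hlen a := by
  have ha' : a ∈ Subsemigroup.closure (RGens (fun _ : Fin 1 => L) ∪ {1}) := ha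
  refine Subsemigroup.closure_induction (p := fun x _ => Good L hlen x) ?_ ?_ ha'
  · rintro x (⟨i, j, hj, hx⟩ | hx)
    · exact good_gen L hnd hlen j (by rw [← hlen]; exact hj) x hx
    · rw [Set.mem_singleton_iff] at hx
      rw [hx]
      exact good_one L hlen
  · intro x y _ _ hx hy
    exact good_mul L hlen x y hx hy

/-- for the single-block R-cross-section `R(M⃗)` of `IS n` with
`M = {m_1 < … < m_n}` listed by `L` (0-based indexing), the unique element `a ∈ R` with
domain `{m_{j_1}, …, m_{j_k}}` (`j` strictly increasing) acts by `m_{j_l} · a = m_{n-k+l}`. -/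
theorem single_block_action (n : ℕ) (L : List (Fin n)) (hnd : L.Nodup) (hlen : L.length = n)
    (k : ℕ) (hk : 0 < k) (j : Fin k → Fin n) (hj : StrictMono j)
    (a : IS n) (ha : a ∈ RSec (fun _ : Fin 1 => L))
    (hdom : pdom a = {x : Fin n | ∃ l : Fin k, x = L[(j l : ℕ)]'(by rw [hlen]; exact (j l).isLt)}) :
    ∀ l : Fin k, ∀ h : n - k + (l : ℕ) < n,
      a (L[(j l : ℕ)]'(by rw [hlen]; exact (j l).isLt)) =
        some (L[n - k + (l : ℕ)]'(by omega)) := by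
  intro l h
  obtain ⟨k', hk', φ, hφm, hφv, hφn⟩ := good_of_mem L hnd hlen a ha
  have hrange : Set.range φ = Set.range j := by
    ext i
    constructor
    · rintro ⟨l', rfl⟩
      have hsome : (a (gg L hlen (φ l'))).isSome := by rw [hφv l']; rfl
      have hmem : gg L hlen (φ l') ∈ pdom a := hsome
      rw [hdom] at hmem
      obtain ⟨l0, hl0⟩ := hmem
      have heq : gg L hlen (φ l') = gg L hlen (j l0) := hl0
      exact ⟨l0, (gg_inj hnd hlen heq).symm⟩
    · rintro ⟨l', rfl⟩
      by_contra hcon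
      have hnone := hφn (j l') hcon
      have hmem : gg L hlen (j l') ∈ pdom a := by
        rw [hdom]; exact ⟨l', rfl⟩
      have hsome : (a (gg L hlen (j l'))).isSome := hmem
      rw [hnone] at hsome
      exact absurd hsome (by simp)
  have hkk : k' = k := by
    have h1 : Nat.card (Set.range φ) = k' := by
      rw [Nat.card_range_of_injective hφm.injective]; simp
    have h2 : Nat.card (Set.range j) = k := by
      rw [Nat.card_range_of_injective hj.injective]; simp
    rw [hrange, h2] at h1
    omega
  subst hkk
  have hφj : φ = j := by
    have inst : WellFoundedLT (Fin k') := inferInstance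
    exact (@StrictMono.range_inj (Fin k') (Fin n) _ _ inst φ j hφm hj).1 hrange
  subst hφj
  exact hφv l

end ISW
end
end
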